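/- arXiv:1711.08846 — 9 statements merged into one kernel-verified Lean document; each statement's English description precedes it below -/
import Mathlib

section
/- Let (X, d_X) be a compact metric space, A a unital C*-algebra, and ‖·‖_n a norm on A with constants M, N > 0 satisfying M‖·‖_n ≤ ‖·‖_A ≤ N‖·‖_n. Then the seminorms L^{(n),C(X)} and L^{(n),ℂ} are (N/M, 0)-quasi-Leibniz: for all self-adjoint a, b ∈ C(X,A) with L(a), L(b) < ∞, max{ L(a∘b), L({a,b}) } ≤ (N/M)·( ‖a‖_{C(X,A)} L(b) + ‖b‖_{C(X,A)} L(a) ), where L denotes L^{(n),C(X)} or L^{(n),ℂ} respectively. -/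
open scoped ENNReal

section Defs

variable {X : Type*} [MetricSpace X] [CompactSpace X]
variable {A : Type*} [NormedRing A] [StarRing A] [CStarRing A]
  [NormedAlgebra ℂ A] [StarModule ℂ A] [CompleteSpace A]

/-- `nn` is a norm on `A` over `ℝ` (in particular, any norm over `ℂ` qualifies). -/
def IsNormOn (A : Type*) [NormedRing A] [NormedAlgebra ℂ A] (nn : A → ℝ) : Prop :=
  (∀ x, 0 ≤ nn x) ∧ (∀ x, nn x = 0 ↔ x = 0) ∧
    (∀ x y, nn (x + y) ≤ nn x + nn y) ∧ ∀ (r : ℝ) (x : A), nn ((r : ℂ) • x) = |r| * nn x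

/-- The Lipschitz-type quantity `l^{(n)}_{d_X}` on `C(X, A)`, valued in `[0,∞]`. -/
noncomputable def lipn (nn : A → ℝ) (a : C(X, A)) : ℝ≥0∞ :=
  ⨆ (p : X × X) (_ : p.1 ≠ p.2),
    ENNReal.ofReal (nn (a p.1 - a p.2) / dist p.1 p.2)

/-- The quotient norm of `C(X,A)/C(X, ℂ1_A)`. -/
noncomputable def quotCXA (a : C(X, A)) : ℝ :=
  sInf { r : ℝ | ∃ b : C(X, A), (∀ x, ∃ c : ℂ, b x = c • (1 : A)) ∧ r = ‖a - b‖ }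

/-- The quotient norm of `C(X,A)/ℂ1_{C(X,A)}`. -/
noncomputable def quotC (a : C(X, A)) : ℝ :=
  ⨅ c : ℂ, ‖a - c • (1 : C(X, A))‖

/-- The seminorm `L^{(n),C(X)}`. -/
noncomputable def LCXn (nn : A → ℝ) (a : C(X, A)) : ℝ≥0∞ :=
  max (lipn nn a) (ENNReal.ofReal (quotCXA a))

/-- The seminorm `L^{(n),ℂ}`. -/
noncomputable def LCn (nn : A → ℝ) (a : C(X, A)) : ℝ≥0∞ :=
  max (lipn nn a) (ENNReal.ofReal (quotC a))

/-- The seminorm `L^{(n),μ}`. -/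
noncomputable def Lmun (nn : A → ℝ) (μ : C(X, A) →L[ℂ] ℂ) (a : C(X, A)) : ℝ≥0∞ :=
  max (lipn nn a) (ENNReal.ofReal ‖a - μ a • (1 : C(X, A))‖)

end Defs

/-- A state on a unital C*-algebra: a continuous linear functional sending `1` to `1`
and `star b * b` to a nonnegative real for every `b`. -/
def IsState {B : Type*} [NormedRing B] [NormedAlgebra ℂ B] [StarRing B]
    (φ : B →L[ℂ] ℂ) : Prop :=
  φ 1 = 1 ∧ ∀ b : B, 0 ≤ (φ (star b * b)).re ∧ (φ (star b * b)).im = 0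

/-- A pure state: an extreme point of the state space. -/
def IsPureState {B : Type*} [NormedRing B] [NormedAlgebra ℂ B] [StarRing B]
    (φ : B →L[ℂ] ℂ) : Prop :=
  φ ∈ Set.extremePoints ℝ { ψ : B →L[ℂ] ℂ | IsState ψ }

/-- The Monge–Kantorovich distance associated to a `[0,∞]`-valued seminorm `L`. -/
noncomputable def mkDist {B : Type*} [NormedRing B] [NormedAlgebra ℂ B] [StarRing B]
    (L : B → ℝ≥0∞) (φ ψ : B →L[ℂ] ℂ) : ℝ≥0∞ :=
  ⨆ (a : B) (_ : IsSelfAdjoint a ∧ L a ≤ 1), ENNReal.ofReal ‖φ a - ψ a‖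


set_option linter.unusedSectionVars false in
private lemma s2_clamp_abs {x s R : ℝ} (hx : |x| ≤ R) :
    |x - max (-R) (min R s)| ≤ |x - s| := by
  have h1 : x - s ≤ |x - s| := le_abs_self _
  have h2 : s - x ≤ |x - s| := by rw [abs_sub_comm]; exact le_abs_self _
  have h0 : (0:ℝ) ≤ |x - s| := abs_nonneg _
  rw [abs_le] at hx
  rcases le_total s R with hsR | hsR
  · rcases le_total (-R) s with hRs | hRs
    · rw [min_eq_right hsR, max_eq_right hRs, abs_le]; constructor <;> linarith
    · rw [min_eq_right hsR, max_eq_left hRs, abs_le]; constructor <;> linarith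
  · rw [min_eq_left hsR, max_eq_right (by linarith : -R ≤ R), abs_le]
    constructor <;> linarith

private lemma s2_clamp_le {s R : ℝ} (hR : 0 ≤ R) : |max (-R) (min R s)| ≤ R :=
  abs_le.mpr ⟨le_max_left _ _, max_le (by linarith) (min_le_left _ _)⟩

private lemma s2_eps_div_bound {S ε : ℝ} (hS : 0 ≤ S) (hε : 0 < ε) : ε / (S + 1) * S ≤ ε := by
  rw [div_mul_eq_mul_div, div_le_iff₀ (by linarith)]
  nlinarith

section Trunc
variable {B : Type*} [NormedRing B] [StarRing B] [CStarRing B]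
  [NormedAlgebra ℂ B] [StarModule ℂ B] [CompleteSpace B] [Nontrivial B]

private lemma s2_trunc_smul_one {v : B} (hv : IsSelfAdjoint v) (t : ℂ) {R : ℝ} (hR : ‖v‖ ≤ R) :
    ‖v - (↑(max (-R) (min R t.re)) : ℂ) • 1‖ ≤ ‖v - t • 1‖ := by
  letI : CStarAlgebra B := ⟨⟩
  set s : ℝ := t.re with hs
  set g : ℝ := max (-R) (min R s) with hgdef
  have hsa : ∀ r : ℝ, IsSelfAdjoint (v - (r:ℂ) • 1) := fun r => by
    refine hv.sub ?_
    simp [IsSelfAdjoint, star_smul, Complex.conj_ofReal]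
  have halg : ∀ r : ℝ, ((r:ℂ) • 1 : B) = algebraMap ℂ B (r:ℂ) :=
    fun r => (Algebra.algebraMap_eq_smul_one _).symm
  have step2 : ‖v - (g:ℂ) • 1‖ ≤ ‖v - (s:ℂ) • 1‖ := by
    have key : spectralRadius ℂ (v - (g:ℂ) • 1) ≤ spectralRadius ℂ (v - (s:ℂ) • 1) := by
      simp only [spectralRadius]
      refine iSup₂_le fun z hz => ?_
      rw [halg g, ← spectrum.sub_singleton_eq] at hz
      obtain ⟨μ, hμ, w, hw, rfl⟩ := Set.mem_sub.mp hz
      rw [Set.mem_singleton_iff] at hw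
      subst hw
      have hμre : μ = (μ.re : ℂ) := hv.mem_spectrum_eq_re hμ
      have hμR : |μ.re| ≤ R :=
        le_trans (le_trans (Complex.abs_re_le_norm μ)
          (spectrum.norm_le_norm_of_mem hμ)) hR
      have hmem : μ - (s:ℂ) ∈ spectrum ℂ (v - (s:ℂ) • 1) := by
        rw [halg s, ← spectrum.sub_singleton_eq]
        exact Set.sub_mem_sub hμ rfl
      calc (‖μ - (g:ℂ)‖₊ : ℝ≥0∞) ≤ (‖μ - (s:ℂ)‖₊ : ℝ≥0∞) := by
            rw [ENNReal.coe_le_coe, ← NNReal.coe_le_coe, coe_nnnorm, coe_nnnorm]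
            rw [hμre]
            calc ‖((μ.re:ℂ) - (g:ℂ))‖ = |μ.re - g| := by
                  rw [← Complex.ofReal_sub, Complex.norm_real]; rfl
              _ ≤ |μ.re - s| := s2_clamp_abs hμR
              _ = ‖((μ.re:ℂ) - (s:ℂ))‖ := by
                  rw [← Complex.ofReal_sub, Complex.norm_real]; rfl
        _ ≤ ⨆ k ∈ spectrum ℂ (v - (s:ℂ) • 1), (‖k‖₊ : ℝ≥0∞) :=
            le_iSup₂ (f := fun k (_ : k ∈ spectrum ℂ (v - (s:ℂ) • 1)) => (‖k‖₊ : ℝ≥0∞))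
              (μ - (s:ℂ)) hmem
    have h1 := (hsa g).spectralRadius_eq_nnnorm
    have h2 := (hsa s).spectralRadius_eq_nnnorm
    rw [h1, h2, ENNReal.coe_le_coe] at key
    exact key
  have step1 : ‖v - (s:ℂ) • 1‖ ≤ ‖v - t • 1‖ := by
    have hts : (star t : ℂ) = 2*(s:ℂ) - t := by
      rw [Complex.star_def]
      have := Complex.add_conj t
      push_cast at this
      linear_combination this
    have hid : v - (s:ℂ) • 1 = (2:ℂ)⁻¹ • ((v - t • 1) + star (v - t • 1)) := by
      rw [star_sub, hv.star_eq, star_smul, star_one, hts]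
      module
    rw [hid]
    calc ‖(2:ℂ)⁻¹ • ((v - t • 1) + star (v - t • 1))‖
        ≤ ‖(2:ℂ)⁻¹‖ * (‖v - t • 1‖ + ‖star (v - t • 1)‖) := by
          rw [norm_smul]; gcongr; exact norm_add_le _ _
      _ = ‖v - t • 1‖ := by rw [norm_star]; simp; ring
  exact step2.trans step1

end Trunc

section Statement2Aux
set_option linter.unusedSectionVars false

variable {X : Type*} [MetricSpace X] [CompactSpace X]
variable {A : Type*} [NormedRing A] [StarRing A] [CStarRing A]
  [NormedAlgebra ℂ A] [StarModule ℂ A] [CompleteSpace A]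

private lemma s2_jordan_diff (a b : C(X,A)) (x y : X) :
    ‖(((2:ℂ)⁻¹) • (a * b + b * a)) x - (((2:ℂ)⁻¹) • (a * b + b * a)) y‖
      ≤ ‖a‖ * ‖b x - b y‖ + ‖b‖ * ‖a x - a y‖ := by
  have hid : (((2:ℂ)⁻¹) • (a * b + b * a)) x - (((2:ℂ)⁻¹) • (a * b + b * a)) y
      = (2:ℂ)⁻¹ • (a x * (b x - b y) + (a x - a y) * b y
          + (b x * (a x - a y) + (b x - b y) * a y)) := by
    simp only [ContinuousMap.smul_apply, ContinuousMap.add_apply, ContinuousMap.mul_apply,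
      mul_sub, sub_mul, smul_add, smul_sub]
    module
  rw [hid, norm_smul]
  have h5 : ‖((2:ℂ)⁻¹)‖ = 2⁻¹ := by simp
  rw [h5]
  have h1 : ‖a x * (b x - b y) + (a x - a y) * b y + (b x * (a x - a y) + (b x - b y) * a y)‖
      ≤ ‖a‖ * ‖b x - b y‖ + ‖a x - a y‖ * ‖b‖ + (‖b‖ * ‖a x - a y‖ + ‖b x - b y‖ * ‖a‖) := by
    refine le_trans (norm_add_le _ _) ?_
    gcongr
    · refine le_trans (norm_add_le _ _) ?_
      gcongr
      · exact le_trans (norm_mul_le _ _) (by gcongr; exact a.norm_coe_le_norm x)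
      · exact le_trans (norm_mul_le _ _) (by gcongr; exact b.norm_coe_le_norm y)
    · refine le_trans (norm_add_le _ _) ?_
      gcongr
      · exact le_trans (norm_mul_le _ _) (by gcongr; exact b.norm_coe_le_norm x)
      · exact le_trans (norm_mul_le _ _) (by gcongr; exact a.norm_coe_le_norm y)
  nlinarith [norm_nonneg (a x - a y), norm_nonneg (b x - b y), norm_nonneg a, norm_nonneg b]

private lemma s2_lie_diff (a b : C(X,A)) (x y : X) :
    ‖(((2 * Complex.I)⁻¹) • (a * b - b * a)) x - (((2 * Complex.I)⁻¹) • (a * b - b * a)) y‖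
      ≤ ‖a‖ * ‖b x - b y‖ + ‖b‖ * ‖a x - a y‖ := by
  have hid : (((2 * Complex.I)⁻¹) • (a * b - b * a)) x
        - (((2 * Complex.I)⁻¹) • (a * b - b * a)) y
      = (2 * Complex.I)⁻¹ • (a x * (b x - b y) + (a x - a y) * b y
          - (b x * (a x - a y) + (b x - b y) * a y)) := by
    simp only [ContinuousMap.smul_apply, ContinuousMap.sub_apply, ContinuousMap.mul_apply,
      mul_sub, sub_mul, smul_add, smul_sub]
    module
  rw [hid, norm_smul]
  have h5 : ‖((2 * Complex.I)⁻¹)‖ = 2⁻¹ := by simp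
  rw [h5]
  have h1 : ‖a x * (b x - b y) + (a x - a y) * b y - (b x * (a x - a y) + (b x - b y) * a y)‖
      ≤ ‖a‖ * ‖b x - b y‖ + ‖a x - a y‖ * ‖b‖ + (‖b‖ * ‖a x - a y‖ + ‖b x - b y‖ * ‖a‖) := by
    refine le_trans (norm_sub_le _ _) ?_
    gcongr
    · refine le_trans (norm_add_le _ _) ?_
      gcongr
      · exact le_trans (norm_mul_le _ _) (by gcongr; exact a.norm_coe_le_norm x)
      · exact le_trans (norm_mul_le _ _) (by gcongr; exact b.norm_coe_le_norm y)
    · refine le_trans (norm_add_le _ _) ?_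
      gcongr
      · exact le_trans (norm_mul_le _ _) (by gcongr; exact b.norm_coe_le_norm x)
      · exact le_trans (norm_mul_le _ _) (by gcongr; exact a.norm_coe_le_norm y)
  nlinarith [norm_nonneg (a x - a y), norm_nonneg (b x - b y), norm_nonneg a, norm_nonneg b]

private lemma s2_lipn_le_aux (nn : A → ℝ) (hnn : IsNormOn A nn) {M N : ℝ} (hM : 0 < M)
    (hN : 0 < N)
    (hMN : ∀ x : A, M * nn x ≤ ‖x‖ ∧ ‖x‖ ≤ N * nn x) (a b P : C(X,A))
    (hP : ∀ x y : X, ‖P x - P y‖ ≤ ‖a‖ * ‖b x - b y‖ + ‖b‖ * ‖a x - a y‖) :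
    lipn nn P ≤ ENNReal.ofReal (N/M) *
      (ENNReal.ofReal ‖a‖ * lipn nn b + ENNReal.ofReal ‖b‖ * lipn nn a) := by
  refine iSup₂_le fun p hp => ?_
  obtain ⟨x, y⟩ := p
  simp only at hp ⊢
  have hd : 0 < dist x y := dist_pos.mpr hp
  have hnb := (hnn.1 (b x - b y))
  have hna := (hnn.1 (a x - a y))
  have h2 : M * nn (P x - P y) ≤ N * (‖a‖ * nn (b x - b y) + ‖b‖ * nn (a x - a y)) :=
    calc M * nn (P x - P y) ≤ ‖P x - P y‖ := (hMN _).1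
      _ ≤ ‖a‖ * ‖b x - b y‖ + ‖b‖ * ‖a x - a y‖ := hP x y
      _ ≤ ‖a‖ * (N * nn (b x - b y)) + ‖b‖ * (N * nn (a x - a y)) := by
          gcongr
          · exact (hMN _).2
          · exact (hMN _).2
      _ = N * (‖a‖ * nn (b x - b y) + ‖b‖ * nn (a x - a y)) := by ring
  have h1 : nn (P x - P y) ≤ (N/M) * (‖a‖ * nn (b x - b y) + ‖b‖ * nn (a x - a y)) := by
    rw [div_mul_eq_mul_div, le_div_iff₀ hM, mul_comm (nn _) M]
    linarith [h2]
  have hdiv : nn (P x - P y) / dist x y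
      ≤ (N/M) * (‖a‖ * (nn (b x - b y) / dist x y) + ‖b‖ * (nn (a x - a y) / dist x y)) := by
    rw [show (N/M) * (‖a‖ * (nn (b x - b y) / dist x y) + ‖b‖ * (nn (a x - a y) / dist x y))
        = ((N/M) * (‖a‖ * nn (b x - b y) + ‖b‖ * nn (a x - a y))) / dist x y by ring]
    exact div_le_div_of_nonneg_right h1 hd.le |>.trans_eq rfl
  calc ENNReal.ofReal (nn (P x - P y) / dist x y)
      ≤ ENNReal.ofReal ((N/M) * (‖a‖ * (nn (b x - b y) / dist x y)
          + ‖b‖ * (nn (a x - a y) / dist x y))) := ENNReal.ofReal_le_ofReal hdiv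
    _ = ENNReal.ofReal (N/M) * (ENNReal.ofReal ‖a‖
          * ENNReal.ofReal (nn (b x - b y) / dist x y)
          + ENNReal.ofReal ‖b‖ * ENNReal.ofReal (nn (a x - a y) / dist x y)) := by
        rw [ENNReal.ofReal_mul (by positivity), ENNReal.ofReal_add (by positivity) (by positivity),
          ENNReal.ofReal_mul (norm_nonneg _), ENNReal.ofReal_mul (norm_nonneg _)]
    _ ≤ ENNReal.ofReal (N/M) *
        (ENNReal.ofReal ‖a‖ * lipn nn b + ENNReal.ofReal ‖b‖ * lipn nn a) := by
        gcongr
        · exact le_iSup₂_of_le (x, y) hp le_rfl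
        · exact le_iSup₂_of_le (x, y) hp le_rfl

private lemma s2_quotC_nonneg (a : C(X,A)) : 0 ≤ quotC a :=
  Real.iInf_nonneg fun _ => norm_nonneg _

private lemma s2_quotC_le (a : C(X,A)) (c : ℂ) : quotC a ≤ ‖a - c • 1‖ :=
  ciInf_le ⟨0, by rintro r ⟨c', rfl⟩; exact norm_nonneg _⟩ c

private lemma s2_quotC_approx [Nontrivial A] [Nonempty X] {a : C(X,A)} (ha : IsSelfAdjoint a)
    {ε : ℝ} (hε : 0 < ε) :
    ∃ g : ℝ, |g| ≤ ‖a‖ ∧ ‖a - ((g:ℂ)) • 1‖ < quotC a + ε := by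
  obtain ⟨c, hc⟩ := exists_lt_of_ciInf_lt (lt_add_of_pos_right (quotC a) hε)
  refine ⟨max (-‖a‖) (min ‖a‖ c.re), s2_clamp_le (norm_nonneg a), ?_⟩
  exact lt_of_le_of_lt (s2_trunc_smul_one ha c le_rfl) hc

private lemma s2_quotCXA_bdd (a : C(X,A)) :
    BddBelow { r : ℝ | ∃ b : C(X, A), (∀ x, ∃ c : ℂ, b x = c • (1 : A)) ∧ r = ‖a - b‖ } :=
  ⟨0, by rintro r ⟨b, -, rfl⟩; exact norm_nonneg _⟩

private lemma s2_quotCXA_mem (a : C(X,A)) :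
    Set.Nonempty { r : ℝ | ∃ b : C(X, A), (∀ x, ∃ c : ℂ, b x = c • (1 : A)) ∧ r = ‖a - b‖ } :=
  ⟨‖a - 0‖, 0, fun x => ⟨0, by simp⟩, rfl⟩

private lemma s2_quotCXA_nonneg (a : C(X,A)) : 0 ≤ quotCXA a :=
  Real.sInf_nonneg (by rintro r ⟨b, -, rfl⟩; exact norm_nonneg _)

private lemma s2_quotCXA_le (a b : C(X,A)) (hb : ∀ x, ∃ c : ℂ, b x = c • (1 : A)) :
    quotCXA a ≤ ‖a - b‖ :=
  csInf_le (s2_quotCXA_bdd a) ⟨b, hb, rfl⟩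

private lemma s2_scalar_mul (b₁ b₂ : C(X,A)) (h₁ : ∀ x, ∃ c : ℂ, b₁ x = c • (1:A))
    (h₂ : ∀ x, ∃ c : ℂ, b₂ x = c • (1:A)) :
    ∀ x, ∃ c : ℂ, (b₁ * b₂) x = c • (1:A) := fun x => by
  obtain ⟨c₁, e₁⟩ := h₁ x; obtain ⟨c₂, e₂⟩ := h₂ x
  exact ⟨c₁ * c₂, by rw [ContinuousMap.mul_apply, e₁, e₂, smul_mul_smul_comm, one_mul]⟩

private lemma s2_scalar_central (b₁ : C(X,A)) (h₁ : ∀ x, ∃ c : ℂ, b₁ x = c • (1:A))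
    (z : C(X,A)) : b₁ * z = z * b₁ := ContinuousMap.ext fun x => by
  obtain ⟨c, e⟩ := h₁ x
  rw [ContinuousMap.mul_apply, ContinuousMap.mul_apply, e, smul_mul_assoc, one_mul,
    mul_smul_comm, mul_one]

private lemma s2_quotCXA_approx [Nontrivial A] {a : C(X,A)} (ha : IsSelfAdjoint a)
    {ε : ℝ} (hε : 0 < ε) :
    ∃ a' : C(X,A), (∀ x, ∃ c : ℂ, a' x = c • (1:A)) ∧ ‖a'‖ ≤ ‖a‖ ∧
      ‖a - a'‖ < quotCXA a + ε := by
  obtain ⟨r, ⟨b₀, hb₀, rfl⟩, hr⟩ :=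
    exists_lt_of_csInf_lt (s2_quotCXA_mem a) (lt_add_of_pos_right (quotCXA a) hε)
  choose c hc using hb₀
  have hdist : ∀ x y : X, dist (c x) (c y) = dist (b₀ x) (b₀ y) := fun x y => by
    rw [dist_eq_norm, dist_eq_norm, hc x, hc y, ← sub_smul, norm_smul, norm_one, mul_one]
  have hcont : Continuous c := by
    rw [Metric.continuous_iff]
    intro x ε' hε'
    obtain ⟨δ, hδ, h⟩ := Metric.continuous_iff.mp b₀.continuous x ε' hε'
    exact ⟨δ, hδ, fun y hy => by rw [hdist]; exact h y hy⟩
  set f : X → ℝ := fun x => max (-‖a‖) (min ‖a‖ (c x).re) with hf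
  have hfc : Continuous f := continuous_const.max (continuous_const.min
    (Complex.continuous_re.comp hcont))
  set a' : C(X,A) := ⟨fun x => ((f x : ℝ):ℂ) • 1,
    ((Complex.continuous_ofReal.comp hfc).smul continuous_const)⟩ with ha'
  have hax : ∀ x : X, IsSelfAdjoint (a x) := fun x => by
    have := congrArg (fun u : C(X,A) => u x) ha.star_eq
    exact (show star (a x) = a x by simpa [ContinuousMap.star_apply] using this)
  refine ⟨a', fun x => ⟨(f x : ℂ), rfl⟩, ?_, lt_of_le_of_lt ?_ hr⟩
  · refine (ContinuousMap.norm_le _ (norm_nonneg a)).mpr fun x => ?_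
    rw [ha']
    simp only [ContinuousMap.coe_mk]
    rw [norm_smul, norm_one, mul_one, Complex.norm_real, Real.norm_eq_abs]
    exact s2_clamp_le (norm_nonneg a)
  · refine (ContinuousMap.norm_le _ (norm_nonneg _)).mpr fun x => ?_
    rw [ContinuousMap.sub_apply]
    calc ‖a x - a' x‖ ≤ ‖a x - c x • 1‖ := by
          rw [ha']
          simp only [ContinuousMap.coe_mk]
          exact s2_trunc_smul_one (hax x) (c x) (a.norm_coe_le_norm x)
      _ = ‖(a - b₀) x‖ := by rw [ContinuousMap.sub_apply, hc x]
      _ ≤ ‖a - b₀‖ := (a - b₀).norm_coe_le_norm x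

private lemma s2_half_norm_bound (u b : C(X,A)) :
    ‖(2:ℂ)⁻¹ • (u * b + b * u)‖ ≤ ‖u‖ * ‖b‖ := by
  rw [norm_smul]
  have h1 : ‖((2:ℂ)⁻¹)‖ = 2⁻¹ := by simp
  rw [h1]
  have := norm_add_le (u*b) (b*u)
  have h2 := norm_mul_le u b
  have h3 := norm_mul_le b u
  nlinarith [norm_nonneg u, norm_nonneg b]

private lemma s2_lie_norm_bound (u b : C(X,A)) :
    ‖(2 * Complex.I)⁻¹ • (u * b - b * u)‖ ≤ ‖u‖ * ‖b‖ := by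
  rw [norm_smul]
  have h1 : ‖((2 * Complex.I)⁻¹)‖ = 2⁻¹ := by simp
  rw [h1]
  have := norm_sub_le (u*b) (b*u)
  have h2 := norm_mul_le u b
  have h3 := norm_mul_le b u
  nlinarith [norm_nonneg u, norm_nonneg b]

private lemma s2_quotC_jordan (a b : C(X,A)) (ha : IsSelfAdjoint a) (hb : IsSelfAdjoint b) :
    quotC (((2:ℂ)⁻¹) • (a * b + b * a)) ≤ ‖a‖ * quotC b + ‖b‖ * quotC a := by
  have hR : 0 ≤ ‖a‖ * quotC b + ‖b‖ * quotC a :=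
    add_nonneg (mul_nonneg (norm_nonneg a) (s2_quotC_nonneg b))
      (mul_nonneg (norm_nonneg b) (s2_quotC_nonneg a))
  rcases subsingleton_or_nontrivial C(X,A) with hS | hS
  · refine le_trans (le_trans (s2_quotC_le _ 0) ?_) hR
    rw [Subsingleton.elim ((((2:ℂ)⁻¹) • (a * b + b * a)) - (0:ℂ) • 1) (0 : C(X,A)), norm_zero]
  · have hA : Nontrivial A := by
      rcases hS with ⟨f, g, hfg⟩
      by_contra h
      rw [not_nontrivial_iff_subsingleton] at h
      exact hfg (ContinuousMap.ext fun x => Subsingleton.elim _ _)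
    have hX : Nonempty X := by
      by_contra h
      rw [not_nonempty_iff] at h
      rcases hS with ⟨f, g, hfg⟩
      exact hfg (ContinuousMap.ext fun x => (h.false x).elim)
    refine le_of_forall_sub_le fun ε hε => ?_
    set ε₁ := ε / (‖a‖ + ‖b‖ + 1) with hε₁
    have hε₁pos : 0 < ε₁ := by positivity
    obtain ⟨g, hgle, hg⟩ := s2_quotC_approx ha hε₁pos
    obtain ⟨m, hmle, hm⟩ := s2_quotC_approx hb hε₁pos
    have hid : ((2:ℂ)⁻¹) • (a * b + b * a) - ((g:ℂ) * (m:ℂ)) • 1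
        = (2:ℂ)⁻¹ • ((a - (g:ℂ) • 1) * b + b * (a - (g:ℂ) • 1)) + (g:ℂ) • (b - (m:ℂ) • 1) := by
      simp only [sub_mul, mul_sub, smul_mul_assoc, one_mul, mul_smul_comm, mul_one,
        smul_sub, smul_add, smul_smul]
      module
    have key : quotC (((2:ℂ)⁻¹) • (a * b + b * a)) ≤
        (quotC a + ε₁) * ‖b‖ + ‖a‖ * (quotC b + ε₁) := by
      refine le_trans (s2_quotC_le _ ((g:ℂ) * (m:ℂ))) ?_
      rw [hid]
      refine le_trans (norm_add_le _ _) ?_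
      have h1 := s2_half_norm_bound (a - (g:ℂ) • 1) b
      have h2 : ‖(g:ℂ) • (b - (m:ℂ) • 1)‖ ≤ ‖a‖ * ‖b - (m:ℂ) • 1‖ := by
        rw [norm_smul, Complex.norm_real, Real.norm_eq_abs]
        exact mul_le_mul_of_nonneg_right hgle (norm_nonneg _)
      have h3 : ‖a - (g:ℂ) • 1‖ * ‖b‖ ≤ (quotC a + ε₁) * ‖b‖ :=
        mul_le_mul_of_nonneg_right hg.le (norm_nonneg _)
      have h4 : ‖a‖ * ‖b - (m:ℂ) • 1‖ ≤ ‖a‖ * (quotC b + ε₁) :=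
        mul_le_mul_of_nonneg_left hm.le (norm_nonneg _)
      linarith
    have hdb : ε₁ * (‖a‖ + ‖b‖) ≤ ε := by
      rw [hε₁]
      exact s2_eps_div_bound (by positivity) hε
    nlinarith [key]

private lemma s2_quotC_lie (a b : C(X,A)) (ha : IsSelfAdjoint a) (hb : IsSelfAdjoint b) :
    quotC (((2 * Complex.I)⁻¹) • (a * b - b * a)) ≤ ‖a‖ * quotC b + ‖b‖ * quotC a := by
  have hR : 0 ≤ ‖a‖ * quotC b + ‖b‖ * quotC a :=
    add_nonneg (mul_nonneg (norm_nonneg a) (s2_quotC_nonneg b))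
      (mul_nonneg (norm_nonneg b) (s2_quotC_nonneg a))
  rcases subsingleton_or_nontrivial C(X,A) with hS | hS
  · refine le_trans (le_trans (s2_quotC_le _ 0) ?_) hR
    rw [Subsingleton.elim ((((2 * Complex.I)⁻¹) • (a * b - b * a)) - (0:ℂ) • 1) (0 : C(X,A)),
      norm_zero]
  · have hA : Nontrivial A := by
      rcases hS with ⟨f, g, hfg⟩
      by_contra h
      rw [not_nontrivial_iff_subsingleton] at h
      exact hfg (ContinuousMap.ext fun x => Subsingleton.elim _ _)
    have hX : Nonempty X := by
      by_contra h
      rw [not_nonempty_iff] at h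
      rcases hS with ⟨f, g, hfg⟩
      exact hfg (ContinuousMap.ext fun x => (h.false x).elim)
    refine le_of_forall_sub_le fun ε hε => ?_
    set ε₁ := ε / (‖a‖ + ‖b‖ + 1) with hε₁
    have hε₁pos : 0 < ε₁ := by positivity
    obtain ⟨g, hgle, hg⟩ := s2_quotC_approx ha hε₁pos
    have hid : ((2 * Complex.I)⁻¹) • (a * b - b * a) - (0:ℂ) • 1
        = (2 * Complex.I)⁻¹ • ((a - (g:ℂ) • 1) * b - b * (a - (g:ℂ) • 1)) := by
      simp only [sub_mul, mul_sub, smul_mul_assoc, one_mul, mul_smul_comm, mul_one,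
        smul_sub, zero_smul, sub_zero]
      module
    have key : quotC (((2 * Complex.I)⁻¹) • (a * b - b * a)) ≤ (quotC a + ε₁) * ‖b‖ := by
      refine le_trans (s2_quotC_le _ 0) ?_
      rw [hid]
      exact le_trans (s2_lie_norm_bound _ _)
        (mul_le_mul_of_nonneg_right hg.le (norm_nonneg _))
    have hdb : ε₁ * ‖b‖ ≤ ε := by
      calc ε₁ * ‖b‖ ≤ ε₁ * (‖a‖ + ‖b‖) := by
            refine mul_le_mul_of_nonneg_left ?_ hε₁pos.le
            linarith [norm_nonneg a]
        _ ≤ ε := by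
            rw [hε₁]
            exact s2_eps_div_bound (by positivity) hε
    nlinarith [s2_quotC_nonneg a, norm_nonneg b, mul_nonneg (norm_nonneg a) (s2_quotC_nonneg b)]

private lemma s2_quotCXA_jordan (a b : C(X,A)) (ha : IsSelfAdjoint a) (hb : IsSelfAdjoint b) :
    quotCXA (((2:ℂ)⁻¹) • (a * b + b * a)) ≤ ‖a‖ * quotCXA b + ‖b‖ * quotCXA a := by
  have hR : 0 ≤ ‖a‖ * quotCXA b + ‖b‖ * quotCXA a :=
    add_nonneg (mul_nonneg (norm_nonneg a) (s2_quotCXA_nonneg b))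
      (mul_nonneg (norm_nonneg b) (s2_quotCXA_nonneg a))
  rcases subsingleton_or_nontrivial A with hS | hS
  · haveI : Subsingleton C(X,A) := ⟨fun f g => ContinuousMap.ext fun x => Subsingleton.elim _ _⟩
    refine le_trans (le_trans (s2_quotCXA_le _ (((2:ℂ)⁻¹) • (a * b + b * a))
      (fun x => ⟨0, Subsingleton.elim _ _⟩)) ?_) hR
    rw [sub_self, norm_zero]
  · refine le_of_forall_sub_le fun ε hε => ?_
    set ε₁ := ε / (‖a‖ + ‖b‖ + 1) with hε₁
    have hε₁pos : 0 < ε₁ := by positivity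
    obtain ⟨a', ha's, ha'n, ha'd⟩ := s2_quotCXA_approx ha hε₁pos
    obtain ⟨b', hb's, hb'n, hb'd⟩ := s2_quotCXA_approx hb hε₁pos
    have hcomm : a' * b = b * a' := s2_scalar_central a' ha's b
    have hid : ((2:ℂ)⁻¹) • (a * b + b * a) - a' * b'
        = (2:ℂ)⁻¹ • ((a - a') * b + b * (a - a')) + a' * (b - b') := by
      simp only [sub_mul, mul_sub, smul_sub, smul_add]
      rw [← hcomm]
      module
    have key : quotCXA (((2:ℂ)⁻¹) • (a * b + b * a)) ≤
        (quotCXA a + ε₁) * ‖b‖ + ‖a‖ * (quotCXA b + ε₁) := by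
      refine le_trans (s2_quotCXA_le _ (a' * b') (s2_scalar_mul a' b' ha's hb's)) ?_
      rw [hid]
      refine le_trans (norm_add_le _ _) ?_
      have h1 := s2_half_norm_bound (a - a') b
      have h2 : ‖a' * (b - b')‖ ≤ ‖a‖ * ‖b - b'‖ :=
        le_trans (norm_mul_le _ _) (mul_le_mul_of_nonneg_right ha'n (norm_nonneg _))
      have h3 : ‖a - a'‖ * ‖b‖ ≤ (quotCXA a + ε₁) * ‖b‖ :=
        mul_le_mul_of_nonneg_right ha'd.le (norm_nonneg _)
      have h4 : ‖a‖ * ‖b - b'‖ ≤ ‖a‖ * (quotCXA b + ε₁) :=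
        mul_le_mul_of_nonneg_left hb'd.le (norm_nonneg _)
      linarith
    have hdb : ε₁ * (‖a‖ + ‖b‖) ≤ ε := by
      rw [hε₁]
      exact s2_eps_div_bound (by positivity) hε
    nlinarith [key]

private lemma s2_quotCXA_lie (a b : C(X,A)) (ha : IsSelfAdjoint a) (hb : IsSelfAdjoint b) :
    quotCXA (((2 * Complex.I)⁻¹) • (a * b - b * a)) ≤ ‖a‖ * quotCXA b + ‖b‖ * quotCXA a := by
  have hR : 0 ≤ ‖a‖ * quotCXA b + ‖b‖ * quotCXA a :=
    add_nonneg (mul_nonneg (norm_nonneg a) (s2_quotCXA_nonneg b))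
      (mul_nonneg (norm_nonneg b) (s2_quotCXA_nonneg a))
  rcases subsingleton_or_nontrivial A with hS | hS
  · haveI : Subsingleton C(X,A) := ⟨fun f g => ContinuousMap.ext fun x => Subsingleton.elim _ _⟩
    refine le_trans (le_trans (s2_quotCXA_le _ (((2 * Complex.I)⁻¹) • (a * b - b * a))
      (fun x => ⟨0, Subsingleton.elim _ _⟩)) ?_) hR
    rw [sub_self, norm_zero]
  · refine le_of_forall_sub_le fun ε hε => ?_
    set ε₁ := ε / (‖a‖ + ‖b‖ + 1) with hε₁
    have hε₁pos : 0 < ε₁ := by positivity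
    obtain ⟨a', ha's, ha'n, ha'd⟩ := s2_quotCXA_approx ha hε₁pos
    have hcomm : a' * b = b * a' := s2_scalar_central a' ha's b
    have hid : ((2 * Complex.I)⁻¹) • (a * b - b * a) - 0
        = (2 * Complex.I)⁻¹ • ((a - a') * b - b * (a - a')) := by
      simp only [sub_mul, mul_sub, smul_sub, sub_zero]
      rw [← hcomm]
      module
    have key : quotCXA (((2 * Complex.I)⁻¹) • (a * b - b * a)) ≤ (quotCXA a + ε₁) * ‖b‖ := by
      refine le_trans (s2_quotCXA_le _ 0 (fun x => ⟨0, by simp⟩)) ?_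
      rw [hid]
      exact le_trans (s2_lie_norm_bound _ _)
        (mul_le_mul_of_nonneg_right ha'd.le (norm_nonneg _))
    have hdb : ε₁ * ‖b‖ ≤ ε := by
      calc ε₁ * ‖b‖ ≤ ε₁ * (‖a‖ + ‖b‖) := by
            refine mul_le_mul_of_nonneg_left ?_ hε₁pos.le
            linarith [norm_nonneg a]
        _ ≤ ε := by
            rw [hε₁]
            exact s2_eps_div_bound (by positivity) hε
    nlinarith [s2_quotCXA_nonneg a, norm_nonneg b,
      mul_nonneg (norm_nonneg a) (s2_quotCXA_nonneg b)]

private lemma s2_assemble (nn : A → ℝ) (hnn : IsNormOn A nn) {M N : ℝ} (hM : 0 < M) (hN : 0 < N)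
    (hMN : ∀ x : A, M * nn x ≤ ‖x‖ ∧ ‖x‖ ≤ N * nn x)
    (Q : C(X,A) → ℝ) (hQ0 : ∀ x, 0 ≤ Q x)
    (a b : C(X,A))
    (hQj : Q (((2:ℂ)⁻¹) • (a * b + b * a)) ≤ ‖a‖ * Q b + ‖b‖ * Q a)
    (hQl : Q (((2 * Complex.I)⁻¹) • (a * b - b * a)) ≤ ‖a‖ * Q b + ‖b‖ * Q a) :
    max (max (lipn nn (((2:ℂ)⁻¹) • (a * b + b * a)))
          (ENNReal.ofReal (Q (((2:ℂ)⁻¹) • (a * b + b * a)))))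
        (max (lipn nn (((2 * Complex.I)⁻¹) • (a * b - b * a)))
          (ENNReal.ofReal (Q (((2 * Complex.I)⁻¹) • (a * b - b * a)))))
      ≤ ENNReal.ofReal (N/M) *
          (ENNReal.ofReal ‖a‖ * max (lipn nn b) (ENNReal.ofReal (Q b)) +
           ENNReal.ofReal ‖b‖ * max (lipn nn a) (ENNReal.ofReal (Q a))) := by
  set S := ENNReal.ofReal ‖a‖ * max (lipn nn b) (ENNReal.ofReal (Q b)) +
           ENNReal.ofReal ‖b‖ * max (lipn nn a) (ENNReal.ofReal (Q a)) with hs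
  have hone : (1:ℝ≥0∞) ≤ ENNReal.ofReal (N/M) ∨ Subsingleton A := by
    rcases subsingleton_or_nontrivial A with h | h
    · exact Or.inr h
    · left
      rw [ENNReal.one_le_ofReal]
      have h1 : nn 1 ≠ 0 := fun h0 => one_ne_zero ((hnn.2.1 1).mp h0)
      have h1p : 0 < nn 1 := lt_of_le_of_ne (hnn.1 1) (Ne.symm h1)
      have hMle : M * nn 1 ≤ N * nn 1 := le_trans (hMN 1).1 (hMN 1).2
      have : M ≤ N := by nlinarith
      rw [le_div_iff₀ hM, one_mul]
      exact this
  have hSle : S ≤ ENNReal.ofReal (N/M) * S := by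
    rcases hone with h | h
    · exact le_mul_of_one_le_left (by simp) h
    · haveI := h
      haveI : Subsingleton C(X,A) := ⟨fun f g => ContinuousMap.ext fun x => Subsingleton.elim _ _⟩
      have hna : ‖a‖ = 0 := norm_eq_zero.mpr (Subsingleton.elim a 0)
      have hnb : ‖b‖ = 0 := norm_eq_zero.mpr (Subsingleton.elim b 0)
      rw [hs, hna, hnb]
      simp
  have hq : ∀ P : C(X,A), Q P ≤ ‖a‖ * Q b + ‖b‖ * Q a →
      ENNReal.ofReal (Q P) ≤ ENNReal.ofReal (N/M) * S := fun P hP => by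
    calc ENNReal.ofReal (Q P) ≤ ENNReal.ofReal (‖a‖ * Q b + ‖b‖ * Q a) :=
          ENNReal.ofReal_le_ofReal hP
      _ = ENNReal.ofReal ‖a‖ * ENNReal.ofReal (Q b)
          + ENNReal.ofReal ‖b‖ * ENNReal.ofReal (Q a) := by
          rw [ENNReal.ofReal_add (mul_nonneg (norm_nonneg _) (hQ0 _))
            (mul_nonneg (norm_nonneg _) (hQ0 _)),
            ENNReal.ofReal_mul (norm_nonneg _), ENNReal.ofReal_mul (norm_nonneg _)]
      _ ≤ S := by
          rw [hs]
          gcongr <;> exact le_max_right _ _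
      _ ≤ ENNReal.ofReal (N/M) * S := hSle
  have hlip : ∀ P : C(X,A),
      (∀ x y : X, ‖P x - P y‖ ≤ ‖a‖ * ‖b x - b y‖ + ‖b‖ * ‖a x - a y‖) →
      lipn nn P ≤ ENNReal.ofReal (N/M) * S := fun P hP => by
    refine le_trans (s2_lipn_le_aux nn hnn hM hN hMN a b P hP) ?_
    rw [hs]
    gcongr <;> exact le_max_left _ _
  exact max_le (max_le (hlip _ (s2_jordan_diff a b)) (hq _ hQj))
    (max_le (hlip _ (s2_lie_diff a b)) (hq _ hQl))

end Statement2Aux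



/-- `L^{(n),C(X)}` and `L^{(n),ℂ}` are `(N/M, 0)`-quasi-Leibniz on

self-adjoint elements with finite seminorm. -/
theorem statement2
    (X : Type*) [MetricSpace X] [CompactSpace X]
    (A : Type*) [NormedRing A] [StarRing A] [CStarRing A]
      [NormedAlgebra ℂ A] [StarModule ℂ A] [CompleteSpace A]
    (nn : A → ℝ) (hnn : IsNormOn A nn) (M N : ℝ) (hM : 0 < M) (hN : 0 < N)
    (hMN : ∀ x : A, M * nn x ≤ ‖x‖ ∧ ‖x‖ ≤ N * nn x) :
    (∀ a b : C(X, A), IsSelfAdjoint a → IsSelfAdjoint b →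
      LCXn nn a < ⊤ → LCXn nn b < ⊤ →
      max (LCXn nn (((2 : ℂ)⁻¹) • (a * b + b * a)))
          (LCXn nn (((2 * Complex.I)⁻¹) • (a * b - b * a)))
        ≤ ENNReal.ofReal (N / M) *
            (ENNReal.ofReal ‖a‖ * LCXn nn b + ENNReal.ofReal ‖b‖ * LCXn nn a)) ∧
    (∀ a b : C(X, A), IsSelfAdjoint a → IsSelfAdjoint b →
      LCn nn a < ⊤ → LCn nn b < ⊤ →
      max (LCn nn (((2 : ℂ)⁻¹) • (a * b + b * a)))
          (LCn nn (((2 * Complex.I)⁻¹) • (a * b - b * a)))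
        ≤ ENNReal.ofReal (N / M) *
            (ENNReal.ofReal ‖a‖ * LCn nn b + ENNReal.ofReal ‖b‖ * LCn nn a)) := by
  constructor
  · intro a b ha hb _ _
    simp only [LCXn]
    exact s2_assemble nn hnn hM hN hMN quotCXA s2_quotCXA_nonneg a b
      (s2_quotCXA_jordan a b ha hb) (s2_quotCXA_lie a b ha hb)
  · intro a b ha hb _ _
    simp only [LCn]
    exact s2_assemble nn hnn hM hN hMN quotC s2_quotC_nonneg a b
      (s2_quotC_jordan a b ha hb) (s2_quotC_lie a b ha hb)
end

section
/- Let (X, d_X) be a compact metric space, A a unital C*-algebra, ‖·‖_n a norm on A with constants M, N > 0 satisfying M‖·‖_n ≤ ‖·‖_A ≤ N‖·‖_n, and μ a state on C(X,A). Then the seminorm L^{(n),μ} is (max{N/M, 2}, 0)-quasi-Leibniz: for all self-adjoint a, b ∈ C(X,A) with L^{(n),μ}(a), L^{(n),μ}(b) < ∞, max{ L^{(n),μ}(a∘b), L^{(n),μ}({a,b}) } ≤ max{N/M, 2}·( ‖a‖_{C(X,A)} L^{(n),μ}(b) + ‖b‖_{C(X,A)} L^{(n),μ}(a) ). -/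
open scoped ENNReal

section Defs

variable {X : Type*} [MetricSpace X] [CompactSpace X]
variable {A : Type*} [NormedRing A] [StarRing A] [CStarRing A]
  [NormedAlgebra ℂ A] [StarModule ℂ A] [CompleteSpace A]

set_option linter.unusedSectionVars false in
lemma norm_prod_diff_le (f g : C(X, A)) (x y : X) :
    ‖f x * g x - f y * g y‖ ≤ ‖f‖ * ‖g x - g y‖ + ‖g‖ * ‖f x - f y‖ := by
  have h : f x * g x - f y * g y = f x * (g x - g y) + (f x - f y) * g y := by
    rw [mul_sub, sub_mul]; abel
  rw [h]
  calc ‖f x * (g x - g y) + (f x - f y) * g y‖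
      ≤ ‖f x * (g x - g y)‖ + ‖(f x - f y) * g y‖ := norm_add_le _ _
    _ ≤ ‖f x‖ * ‖g x - g y‖ + ‖f x - f y‖ * ‖g y‖ := by
        gcongr <;> [exact norm_mul_le _ _; exact norm_mul_le _ _]
    _ ≤ ‖f‖ * ‖g x - g y‖ + ‖f x - f y‖ * ‖g‖ := by
        gcongr <;> [exact f.norm_coe_le_norm x; exact g.norm_coe_le_norm y]
    _ = ‖f‖ * ‖g x - g y‖ + ‖g‖ * ‖f x - f y‖ := by ring

lemma lipn_le_aux (nn : A → ℝ) (hnn : IsNormOn A nn) (M N : ℝ) (hM : 0 < M) (hN : 0 < N)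
    (hMN : ∀ x : A, M * nn x ≤ ‖x‖ ∧ ‖x‖ ≤ N * nn x) (a b c : C(X, A))
    (hc : ∀ x y : X, ‖c x - c y‖ ≤ ‖a‖ * ‖b x - b y‖ + ‖b‖ * ‖a x - a y‖) :
    lipn nn c ≤ ENNReal.ofReal (N / M) *
      (ENNReal.ofReal ‖a‖ * lipn nn b + ENNReal.ofReal ‖b‖ * lipn nn a) := by
  rw [lipn]
  refine iSup₂_le fun p hp => ?_
  have hd : 0 < dist p.1 p.2 := dist_pos.mpr hp
  have hnm : 0 ≤ N / M := div_nonneg hN.le hM.le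
  have key : nn (c p.1 - c p.2) / dist p.1 p.2 ≤
      (N / M) * (‖a‖ * (nn (b p.1 - b p.2) / dist p.1 p.2)
        + ‖b‖ * (nn (a p.1 - a p.2) / dist p.1 p.2)) := by
    have h1 := (hMN (c p.1 - c p.2)).1
    have h2 := (hMN (b p.1 - b p.2)).2
    have h3 := (hMN (a p.1 - a p.2)).2
    have h4 := hc p.1 p.2
    have h5 : nn (c p.1 - c p.2) ≤ (N / M) * (‖a‖ * nn (b p.1 - b p.2)
        + ‖b‖ * nn (a p.1 - a p.2)) := by
      rw [div_mul_eq_mul_div, le_div_iff₀ hM]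
      have h6 : ‖a‖ * ‖b p.1 - b p.2‖ ≤ ‖a‖ * (N * nn (b p.1 - b p.2)) :=
        mul_le_mul_of_nonneg_left h2 (norm_nonneg _)
      have h7 : ‖b‖ * ‖a p.1 - a p.2‖ ≤ ‖b‖ * (N * nn (a p.1 - a p.2)) :=
        mul_le_mul_of_nonneg_left h3 (norm_nonneg _)
      nlinarith
    calc nn (c p.1 - c p.2) / dist p.1 p.2
        ≤ ((N / M) * (‖a‖ * nn (b p.1 - b p.2) + ‖b‖ * nn (a p.1 - a p.2))) / dist p.1 p.2 := by
          gcongr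
      _ = (N / M) * (‖a‖ * (nn (b p.1 - b p.2) / dist p.1 p.2)
          + ‖b‖ * (nn (a p.1 - a p.2) / dist p.1 p.2)) := by ring
  calc ENNReal.ofReal (nn (c p.1 - c p.2) / dist p.1 p.2)
      ≤ ENNReal.ofReal ((N / M) * (‖a‖ * (nn (b p.1 - b p.2) / dist p.1 p.2)
          + ‖b‖ * (nn (a p.1 - a p.2) / dist p.1 p.2))) := ENNReal.ofReal_le_ofReal key
    _ = ENNReal.ofReal (N / M) *
        (ENNReal.ofReal ‖a‖ * ENNReal.ofReal (nn (b p.1 - b p.2) / dist p.1 p.2)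
          + ENNReal.ofReal ‖b‖ * ENNReal.ofReal (nn (a p.1 - a p.2) / dist p.1 p.2)) := by
        rw [ENNReal.ofReal_mul hnm,
          ENNReal.ofReal_add (mul_nonneg (norm_nonneg _) (div_nonneg (hnn.1 _) dist_nonneg))
            (mul_nonneg (norm_nonneg _) (div_nonneg (hnn.1 _) dist_nonneg)),
          ENNReal.ofReal_mul (norm_nonneg _), ENNReal.ofReal_mul (norm_nonneg _)]
    _ ≤ ENNReal.ofReal (N / M) *
        (ENNReal.ofReal ‖a‖ * lipn nn b + ENNReal.ofReal ‖b‖ * lipn nn a) := by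
        gcongr
        · exact le_iSup₂_of_le p hp le_rfl
        · exact le_iSup₂_of_le p hp le_rfl


end Defs

section StateAux


variable {B : Type*} [CStarAlgebra B]

lemma isState_nontrivial (φ : B →L[ℂ] ℂ) (hφ : IsState φ) : Nontrivial B := by
  by_contra h
  rw [not_nontrivial_iff_subsingleton] at h
  have h1 : (1 : B) = 0 := Subsingleton.elim _ _
  have := hφ.1
  rw [h1, map_zero] at this
  exact one_ne_zero this.symm

lemma isState_apply_algebraMap (φ : B →L[ℂ] ℂ) (hφ : IsState φ) (r : ℝ) :
    φ (algebraMap ℝ B r) = (r : ℂ) := by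
  have h : algebraMap ℝ B r = (r : ℂ) • (1 : B) := by
    rw [Algebra.algebraMap_eq_smul_one, ← Complex.coe_algebraMap, algebraMap_smul]
  rw [h, map_smul, hφ.1, smul_eq_mul, mul_one]

lemma isState_exists_sq (s : B) (hs : IsSelfAdjoint s) (r : ℝ)
    (hr : ∀ t ∈ spectrum ℝ s, 0 ≤ r + t) :
    ∃ b : B, star b * b = algebraMap ℝ B r + s := by
  refine ⟨cfc (fun t : ℝ => Real.sqrt (r + t)) s, ?_⟩
  have hb : IsSelfAdjoint (cfc (fun t : ℝ => Real.sqrt (r + t)) s) := cfc_predicate _ s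
  rw [hb.star_eq, ← cfc_mul _ _ s (by fun_prop) (by fun_prop)]
  have h1 : cfc (fun t : ℝ => Real.sqrt (r + t) * Real.sqrt (r + t)) s
      = cfc (fun t : ℝ => r + t) s :=
    cfc_congr fun t ht => Real.mul_self_sqrt (hr t ht)
  rw [h1]
  exact (cfc_const_add r (fun t : ℝ => t) s (by fun_prop) hs).trans (by rw [cfc_id' ℝ s])

lemma isState_real_bound (φ : B →L[ℂ] ℂ) (hφ : IsState φ) (s : B) (hs : IsSelfAdjoint s) :
    (φ s).im = 0 ∧ ‖φ s‖ ≤ ‖s‖ := by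
  have hnt : Nontrivial B := isState_nontrivial φ hφ
  obtain ⟨b₁, hb₁⟩ := isState_exists_sq s hs ‖s‖ (fun t ht => by
    have h := spectrum.norm_le_norm_of_mem ht
    rw [Real.norm_eq_abs] at h
    have := abs_le.mp h
    linarith [this.1])
  obtain ⟨b₂, hb₂⟩ := isState_exists_sq (-s) hs.neg ‖s‖ (fun t ht => by
    have h := spectrum.norm_le_norm_of_mem ht
    rw [Real.norm_eq_abs, norm_neg] at h
    have := abs_le.mp h
    linarith [this.1])
  have h1 := hφ.2 b₁
  have h2 := hφ.2 b₂
  rw [hb₁, map_add, isState_apply_algebraMap φ hφ] at h1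
  rw [hb₂, map_add, map_neg, isState_apply_algebraMap φ hφ] at h2
  simp only [Complex.add_re, Complex.add_im, Complex.ofReal_re, Complex.ofReal_im,
    Complex.neg_re, Complex.neg_im, zero_add] at h1 h2
  have him : (φ s).im = 0 := h1.2
  refine ⟨him, ?_⟩
  have hre : |(φ s).re| ≤ ‖s‖ := abs_le.mpr ⟨by linarith [h1.1], by linarith [h2.1]⟩
  have : φ s = ((φ s).re : ℂ) := Complex.ext (by simp) (by simp [him])
  rw [this, Complex.norm_real, Real.norm_eq_abs]
  exact hre

lemma isState_sub_smul_one_norm_le (φ : B →L[ℂ] ℂ) (hφ : IsState φ)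
    (c w : B) (hw : IsSelfAdjoint w) (z : ℂ) (h : c = w + z • 1) :
    ‖c - φ c • 1‖ ≤ 2 * ‖w‖ := by
  have hnt : Nontrivial B := isState_nontrivial φ hφ
  have hc : c - φ c • (1 : B) = w - φ w • 1 := by
    rw [h, map_add, map_smul, hφ.1, smul_eq_mul, mul_one, add_smul]; abel
  rw [hc]
  calc ‖w - φ w • (1 : B)‖ ≤ ‖w‖ + ‖φ w • (1 : B)‖ := norm_sub_le _ _
    _ = ‖w‖ + ‖φ w‖ := by rw [norm_smul, norm_one, mul_one]
    _ ≤ ‖w‖ + ‖w‖ := by linarith [(isState_real_bound φ hφ w hw).2]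
    _ = 2 * ‖w‖ := by ring

end StateAux

/-- `L^{(n),μ}` is `(max{N/M, 2}, 0)`-quasi-Leibniz on self-adjoint
elements with finite seminorm. -/
theorem statement3
    (X : Type*) [MetricSpace X] [CompactSpace X]
    (A : Type*) [NormedRing A] [StarRing A] [CStarRing A]
      [NormedAlgebra ℂ A] [StarModule ℂ A] [CompleteSpace A]
    (nn : A → ℝ) (hnn : IsNormOn A nn) (M N : ℝ) (hM : 0 < M) (hN : 0 < N)
    (hMN : ∀ x : A, M * nn x ≤ ‖x‖ ∧ ‖x‖ ≤ N * nn x)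
    (μ : C(X, A) →L[ℂ] ℂ) (hμ : IsState μ) :
    ∀ a b : C(X, A), IsSelfAdjoint a → IsSelfAdjoint b →
      Lmun nn μ a < ⊤ → Lmun nn μ b < ⊤ →
      max (Lmun nn μ (((2 : ℂ)⁻¹) • (a * b + b * a)))
          (Lmun nn μ (((2 * Complex.I)⁻¹) • (a * b - b * a)))
        ≤ ENNReal.ofReal (max (N / M) 2) *
            (ENNReal.ofReal ‖a‖ * Lmun nn μ b + ENNReal.ofReal ‖b‖ * Lmun nn μ a) := by
  
  intro a b ha hb _ _
  letI : CStarAlgebra C(X, A) := {}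
  obtain ⟨hima, -⟩ := isState_real_bound μ hμ a ha
  obtain ⟨himb, hnormb⟩ := isState_real_bound μ hμ b hb
  have hsa1 : IsSelfAdjoint (μ a • (1 : C(X, A))) := by
    exact IsSelfAdjoint.smul (Complex.conj_eq_iff_im.mpr hima) (IsSelfAdjoint.one C(X, A))
  have hsb1 : IsSelfAdjoint (μ b • (1 : C(X, A))) := by
    exact IsSelfAdjoint.smul (Complex.conj_eq_iff_im.mpr himb) (IsSelfAdjoint.one C(X, A))
  set a' := a - μ a • (1 : C(X, A)) with ha'def
  set b' := b - μ b • (1 : C(X, A)) with hb'def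
  have ha'sa : IsSelfAdjoint a' := ha.sub hsa1
  have hb'sa : IsSelfAdjoint b' := hb.sub hsb1
  set c₁ := ((2 : ℂ)⁻¹) • (a * b + b * a) with hc₁def
  set c₂ := ((2 * Complex.I)⁻¹) • (a * b - b * a) with hc₂def
  set w₁ := ((2 : ℂ)⁻¹) • (a * b' + b' * a) + μ b • a' with hw₁def
  have hw₁id : c₁ = w₁ + (μ b * μ a) • (1 : C(X, A)) := by
    rw [hc₁def, hw₁def, ha'def, hb'def]
    simp only [mul_sub, sub_mul, smul_sub, smul_add, mul_smul_comm, smul_mul_assoc,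
      mul_one, one_mul, smul_smul]
    module
  have hw₂id : c₂ = ((2 * Complex.I)⁻¹) • (a * b' - b' * a) := by
    rw [hc₂def, hb'def]
    simp only [mul_sub, sub_mul, smul_sub, mul_smul_comm, smul_mul_assoc, mul_one, one_mul]
    module
  have h2star : star ((2:ℂ)⁻¹) = (2:ℂ)⁻¹ := by simp
  have hstarμb : star (μ b) = μ b := by
    rw [Complex.star_def]; exact Complex.conj_eq_iff_im.mpr himb
  have hw₁sa : IsSelfAdjoint w₁ := by
    rw [hw₁def, IsSelfAdjoint, star_add, star_smul, star_add, star_mul, star_mul,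
      ha.star_eq, hb'sa.star_eq, star_smul, ha'sa.star_eq, h2star, hstarμb,
      add_comm (b' * a)]
  have h2Istar : star ((2 * Complex.I)⁻¹) = -((2 * Complex.I)⁻¹) := by
    simp [Complex.star_def, map_inv₀, Complex.conj_I, inv_neg]
  have hc₂sa : IsSelfAdjoint c₂ := by
    rw [hc₂def, IsSelfAdjoint, star_smul, star_sub, star_mul, star_mul, ha.star_eq,
      hb.star_eq, h2Istar, neg_smul, ← smul_neg, neg_sub]
  have h2norm : ‖((2:ℂ)⁻¹)‖ = 2⁻¹ := by simp
  have h2Inorm : ‖((2 * Complex.I)⁻¹)‖ = 2⁻¹ := by simp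
  have hw₁norm : ‖w₁‖ ≤ ‖a‖ * ‖b'‖ + ‖b‖ * ‖a'‖ := by
    calc ‖w₁‖ = ‖((2:ℂ)⁻¹) • (a * b' + b' * a) + μ b • a'‖ := by rw [hw₁def]
      _ ≤ ‖((2:ℂ)⁻¹) • (a * b' + b' * a)‖ + ‖μ b • a'‖ := norm_add_le _ _
      _ = 2⁻¹ * ‖a * b' + b' * a‖ + ‖μ b‖ * ‖a'‖ := by rw [norm_smul, norm_smul, h2norm]
      _ ≤ 2⁻¹ * (‖a‖ * ‖b'‖ + ‖b'‖ * ‖a‖) + ‖b‖ * ‖a'‖ := by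
          gcongr
          exact (norm_add_le _ _).trans (by gcongr <;> exact norm_mul_le _ _)
      _ = ‖a‖ * ‖b'‖ + ‖b‖ * ‖a'‖ := by ring
  have hc₂norm : ‖c₂‖ ≤ ‖a‖ * ‖b'‖ := by
    calc ‖c₂‖ = 2⁻¹ * ‖a * b' - b' * a‖ := by rw [hw₂id, norm_smul, h2Inorm]
      _ ≤ 2⁻¹ * (‖a‖ * ‖b'‖ + ‖b'‖ * ‖a‖) := by
          gcongr
          exact (norm_sub_le _ _).trans (by gcongr <;> exact norm_mul_le _ _)
      _ = ‖a‖ * ‖b'‖ := by ring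
  have hq1 : ‖c₁ - μ c₁ • (1 : C(X, A))‖ ≤ 2 * (‖a‖ * ‖b'‖ + ‖b‖ * ‖a'‖) := by
    have h := isState_sub_smul_one_norm_le μ hμ c₁ w₁ hw₁sa _ hw₁id
    linarith
  have hq2 : ‖c₂ - μ c₂ • (1 : C(X, A))‖ ≤ 2 * (‖a‖ * ‖b'‖ + ‖b‖ * ‖a'‖) := by
    have h := isState_sub_smul_one_norm_le μ hμ c₂ c₂ hc₂sa 0 (by simp)
    have hba' : 0 ≤ ‖b‖ * ‖a'‖ := mul_nonneg (norm_nonneg _) (norm_nonneg _)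
    linarith
  have hc₁pt : ∀ x y : X, ‖c₁ x - c₁ y‖ ≤ ‖a‖ * ‖b x - b y‖ + ‖b‖ * ‖a x - a y‖ := by
    intro x y
    have e : c₁ x - c₁ y
        = (2:ℂ)⁻¹ • ((a x * b x - a y * b y) + (b x * a x - b y * a y)) := by
      rw [hc₁def]
      simp only [ContinuousMap.smul_apply, ContinuousMap.add_apply, ContinuousMap.mul_apply]
      rw [← smul_sub]; congr 1; abel
    rw [e, norm_smul, h2norm]
    have h1 := norm_prod_diff_le a b x y
    have h2 := norm_prod_diff_le b a x y
    have h3 := norm_add_le (a x * b x - a y * b y) (b x * a x - b y * a y)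
    linarith
  have hc₂pt : ∀ x y : X, ‖c₂ x - c₂ y‖ ≤ ‖a‖ * ‖b x - b y‖ + ‖b‖ * ‖a x - a y‖ := by
    intro x y
    have e : c₂ x - c₂ y
        = (2 * Complex.I)⁻¹ • ((a x * b x - a y * b y) - (b x * a x - b y * a y)) := by
      rw [hc₂def]
      simp only [ContinuousMap.smul_apply, ContinuousMap.sub_apply, ContinuousMap.mul_apply]
      rw [← smul_sub]; congr 1; abel
    rw [e, norm_smul, h2Inorm]
    have h1 := norm_prod_diff_le a b x y
    have h2 := norm_prod_diff_le b a x y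
    have h3 := norm_sub_le (a x * b x - a y * b y) (b x * a x - b y * a y)
    linarith
  have hla : lipn nn a ≤ Lmun nn μ a := le_max_left _ _
  have hlb : lipn nn b ≤ Lmun nn μ b := le_max_left _ _
  have hqa : ENNReal.ofReal ‖a'‖ ≤ Lmun nn μ a := le_max_right _ _
  have hqb : ENNReal.ofReal ‖b'‖ ≤ Lmun nn μ b := le_max_right _ _
  have hKM : ENNReal.ofReal (N / M) ≤ ENNReal.ofReal (max (N / M) 2) :=
    ENNReal.ofReal_le_ofReal (le_max_left _ _)
  have hK2 : ENNReal.ofReal 2 ≤ ENNReal.ofReal (max (N / M) 2) :=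
    ENNReal.ofReal_le_ofReal (le_max_right _ _)
  have hquot : ∀ c : C(X, A), ‖c - μ c • (1 : C(X, A))‖ ≤ 2 * (‖a‖ * ‖b'‖ + ‖b‖ * ‖a'‖) →
      ENNReal.ofReal ‖c - μ c • (1 : C(X, A))‖ ≤ ENNReal.ofReal (max (N / M) 2) *
        (ENNReal.ofReal ‖a‖ * Lmun nn μ b + ENNReal.ofReal ‖b‖ * Lmun nn μ a) := by
    intro c hc
    calc ENNReal.ofReal ‖c - μ c • (1 : C(X, A))‖
        ≤ ENNReal.ofReal (2 * (‖a‖ * ‖b'‖ + ‖b‖ * ‖a'‖)) := ENNReal.ofReal_le_ofReal hc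
      _ = ENNReal.ofReal 2 * (ENNReal.ofReal ‖a‖ * ENNReal.ofReal ‖b'‖
          + ENNReal.ofReal ‖b‖ * ENNReal.ofReal ‖a'‖) := by
          rw [ENNReal.ofReal_mul (by norm_num),
            ENNReal.ofReal_add (mul_nonneg (norm_nonneg _) (norm_nonneg _))
              (mul_nonneg (norm_nonneg _) (norm_nonneg _)),
            ENNReal.ofReal_mul (norm_nonneg _), ENNReal.ofReal_mul (norm_nonneg _)]
      _ ≤ ENNReal.ofReal (max (N / M) 2) *
          (ENNReal.ofReal ‖a‖ * Lmun nn μ b + ENNReal.ofReal ‖b‖ * Lmun nn μ a) := by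
          gcongr
  have hliple : ∀ c : C(X, A),
      (∀ x y : X, ‖c x - c y‖ ≤ ‖a‖ * ‖b x - b y‖ + ‖b‖ * ‖a x - a y‖) →
      lipn nn c ≤ ENNReal.ofReal (max (N / M) 2) *
        (ENNReal.ofReal ‖a‖ * Lmun nn μ b + ENNReal.ofReal ‖b‖ * Lmun nn μ a) := by
    intro c hc
    calc lipn nn c ≤ ENNReal.ofReal (N / M) *
        (ENNReal.ofReal ‖a‖ * lipn nn b + ENNReal.ofReal ‖b‖ * lipn nn a) :=
          lipn_le_aux nn hnn M N hM hN hMN a b c hc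
      _ ≤ ENNReal.ofReal (max (N / M) 2) *
          (ENNReal.ofReal ‖a‖ * Lmun nn μ b + ENNReal.ofReal ‖b‖ * Lmun nn μ a) := by
          gcongr
  exact max_le (max_le (hliple c₁ hc₁pt) (hquot c₁ hq1))
    (max_le (hliple c₂ hc₂pt) (hquot c₂ hq2))
end

section
/- Let (X, d_X) be a compact metric space, A a unital C*-algebra, and ‖·‖_n a norm on A equivalent to the C*-norm. Then each of the functions L^{(n),C(X)}, L^{(n),ℂ}, and L^{(n),μ} (for any state μ on C(X,A)), viewed as a [0,∞]-valued function on C(X,A), is lower semicontinuous with respect to the supremum norm of C(X,A). -/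
open scoped ENNReal

set_option linter.unusedSectionVars false in
lemma lsc_max' {α β : Type*} [TopologicalSpace α] [LinearOrder β] {f g : α → β}
    (hf : LowerSemicontinuous f) (hg : LowerSemicontinuous g) :
    LowerSemicontinuous fun x => max (f x) (g x) := by
  intro x y hy
  rcases lt_max_iff.mp hy with h | h
  · filter_upwards [hf x y h] with z hz using lt_max_iff.mpr (Or.inl hz)
  · filter_upwards [hg x y h] with z hz using lt_max_iff.mpr (Or.inr hz)

section Aux4

set_option linter.unusedSectionVars false

variable {X : Type*} [MetricSpace X] [CompactSpace X]
variable {A : Type*} [NormedRing A] [StarRing A] [CStarRing A]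
  [NormedAlgebra ℂ A] [StarModule ℂ A] [CompleteSpace A]

lemma nn_cont' {nn : A → ℝ} (hnn : IsNormOn A nn) {M : ℝ} (hM : 0 < M)
    (h : ∀ x : A, M * nn x ≤ ‖x‖) : Continuous nn := by
  have tri : ∀ u v : A, nn u - nn v ≤ nn (u - v) := by
    intro u v
    have := hnn.2.2.1 (u - v) v
    rw [sub_add_cancel] at this
    linarith
  have hub : ∀ z : A, nn z ≤ (1 / M) * ‖z‖ := by
    intro z
    rw [div_mul_eq_mul_div, le_div_iff₀ hM, mul_comm]
    simpa using h z
  apply (LipschitzWith.of_dist_le_mul (K := ⟨1 / M, by positivity⟩) ?_).continuous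
  intro x y
  rw [Real.dist_eq, dist_eq_norm, abs_sub_le_iff]
  constructor
  · exact le_trans (tri x y) (hub _)
  · have := le_trans (tri y x) (hub (y - x))
    rwa [norm_sub_rev] at this

lemma quotCXA_cont' : Continuous (quotCXA (X := X) (A := A)) := by
  have hne : ∀ a : C(X, A),
      { r : ℝ | ∃ b : C(X, A), (∀ x, ∃ c : ℂ, b x = c • (1 : A)) ∧ r = ‖a - b‖ }.Nonempty :=
    fun a => ⟨‖a - 0‖, 0, fun x => ⟨0, by simp⟩, rfl⟩
  have hbdd : ∀ a : C(X, A), BddBelow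
      { r : ℝ | ∃ b : C(X, A), (∀ x, ∃ c : ℂ, b x = c • (1 : A)) ∧ r = ‖a - b‖ } :=
    fun a => ⟨0, by rintro r ⟨c, hc, rfl⟩; exact norm_nonneg _⟩
  have key : ∀ a a' : C(X, A), quotCXA a ≤ quotCXA a' + ‖a - a'‖ := by
    intro a a'
    rw [← sub_le_iff_le_add]
    apply le_csInf (hne a')
    rintro r ⟨b, hb, rfl⟩
    have h1 : quotCXA a ≤ ‖a - b‖ := csInf_le (hbdd a) ⟨b, hb, rfl⟩
    have h2 : ‖a - b‖ ≤ ‖a - a'‖ + ‖a' - b‖ := by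
      calc ‖a - b‖ = ‖(a - a') + (a' - b)‖ := by rw [sub_add_sub_cancel]
        _ ≤ _ := norm_add_le _ _
    linarith
  apply (LipschitzWith.of_dist_le_mul (K := 1) ?_).continuous
  intro a b
  rw [Real.dist_eq, abs_sub_le_iff]
  constructor
  · have := key a b; rw [dist_eq_norm]; push_cast; linarith
  · have := key b a; rw [dist_eq_norm, ← norm_sub_rev a b] at *; push_cast; linarith

lemma quotC_cont' : Continuous (quotC (X := X) (A := A)) := by
  have hbdd : ∀ a : C(X, A), BddBelow (Set.range fun c : ℂ => ‖a - c • (1 : C(X, A))‖) :=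
    fun a => ⟨0, by rintro r ⟨c, rfl⟩; exact norm_nonneg _⟩
  have key : ∀ a a' : C(X, A), quotC a ≤ quotC a' + ‖a - a'‖ := by
    intro a a'
    rw [← sub_le_iff_le_add]
    apply le_ciInf
    intro c
    have h1 : quotC a ≤ ‖a - c • (1 : C(X, A))‖ := ciInf_le (hbdd a) c
    have h2 : ‖a - c • (1 : C(X, A))‖ ≤ ‖a - a'‖ + ‖a' - c • (1 : C(X, A))‖ := by
      calc ‖a - c • (1 : C(X, A))‖ = ‖(a - a') + (a' - c • (1 : C(X, A)))‖ := by
            rw [sub_add_sub_cancel]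
        _ ≤ _ := norm_add_le _ _
    linarith
  apply (LipschitzWith.of_dist_le_mul (K := 1) ?_).continuous
  intro a b
  rw [Real.dist_eq, abs_sub_le_iff]
  constructor
  · have := key a b; rw [dist_eq_norm]; push_cast; linarith
  · have := key b a; rw [dist_eq_norm, ← norm_sub_rev a b] at *; push_cast; linarith

lemma lipn_lsc' {nn : A → ℝ} (hc : Continuous nn) :
    LowerSemicontinuous (lipn (X := X) nn) := by
  apply lowerSemicontinuous_iSup
  intro p
  apply lowerSemicontinuous_iSup
  intro _
  apply Continuous.lowerSemicontinuous
  exact ENNReal.continuous_ofReal.comp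
    (((hc.comp ((continuous_eval_const p.1).sub
      (continuous_eval_const p.2)))).div_const _)

end Aux4

/-- lower semicontinuity of `L^{(n),C(X)}`, `L^{(n),ℂ}` and `L^{(n),μ}`
with respect to the supremum norm on `C(X,A)`. -/
theorem statement4
    (X : Type*) [MetricSpace X] [CompactSpace X]
    (A : Type*) [NormedRing A] [StarRing A] [CStarRing A]
      [NormedAlgebra ℂ A] [StarModule ℂ A] [CompleteSpace A]
    (nn : A → ℝ) (hnn : IsNormOn A nn) (M N : ℝ) (hM : 0 < M) (hN : 0 < N)
    (hMN : ∀ x : A, M * nn x ≤ ‖x‖ ∧ ‖x‖ ≤ N * nn x) :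
    LowerSemicontinuous (LCXn (X := X) nn) ∧
    LowerSemicontinuous (LCn (X := X) nn) ∧
    ∀ μ : C(X, A) →L[ℂ] ℂ, IsState μ → LowerSemicontinuous (Lmun nn μ) := by
  have hc : Continuous nn := nn_cont' hnn hM fun x => (hMN x).1
  have hlip : LowerSemicontinuous (lipn (X := X) nn) := lipn_lsc' hc
  refine ⟨?_, ?_, ?_⟩
  · exact lsc_max' hlip
      ((ENNReal.continuous_ofReal.comp quotCXA_cont').lowerSemicontinuous)
  · exact lsc_max' hlip
      ((ENNReal.continuous_ofReal.comp quotC_cont').lowerSemicontinuous)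
  · intro μ _
    exact lsc_max' hlip
      ((ENNReal.continuous_ofReal.comp
        ((continuous_id.sub (μ.continuous.smul continuous_const)).norm)).lowerSemicontinuous)
end

section
/- Let B be a unital C*-algebra and L a seminorm (possibly taking value +∞) on the self-adjoint part of B whose domain { a = a* : L(a) < ∞ } is dense in the self-adjoint part of B. Let D ∈ [0,∞]. If mk_L(μ,ν) ≤ D for all pure states μ, ν on B, then mk_L(μ,ν) ≤ D for all states μ, ν on B. -/
open scoped ENNReal

section StateAux

open ComplexStarModule

variable {B : Type*} [NormedRing B] [StarRing B] [CStarRing B]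
  [NormedAlgebra ℂ B] [StarModule ℂ B] [CompleteSpace B]

private lemma state_apply_nonneg_elt (φ : B →L[ℂ] ℂ) (hφ : IsState φ)
    {y : B} (hy : y ∈ AddSubmonoid.closure (Set.range fun s : B => star s * s)) :
    0 ≤ (φ y).re ∧ (φ y).im = 0 := by
  induction hy using AddSubmonoid.closure_induction with
  | mem x hx => obtain ⟨s, rfl⟩ := hx; exact hφ.2 s
  | zero => simp
  | add x y _ _ hx hy =>
      simp only [map_add, Complex.add_re, Complex.add_im]
      exact ⟨add_nonneg hx.1 hy.1, by rw [hx.2, hy.2, add_zero]⟩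

private lemma state_apply_selfAdjoint (φ : B →L[ℂ] ℂ) (hφ : IsState φ)
    {x : B} (hx : IsSelfAdjoint x) :
    φ x = ((φ x).re : ℂ) ∧ |(φ x).re| ≤ ‖x‖ := by
  letI : CStarAlgebra B := { }
  letI := CStarAlgebra.spectralOrder B
  haveI := CStarAlgebra.spectralOrderedRing B
  have key : ∀ z : B, (0 : B) ≤ z → 0 ≤ (φ z).re ∧ (φ z).im = 0 := fun z hz =>
    state_apply_nonneg_elt φ hφ (StarOrderedRing.nonneg_iff.mp hz)
  have hmap : ∀ r : ℝ, φ (algebraMap ℝ B r) = (r : ℂ) := by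
    intro r
    rw [IsScalarTower.algebraMap_apply ℝ ℂ B, Algebra.algebraMap_eq_smul_one, map_smul,
      hφ.1, smul_eq_mul, mul_one]
    rfl
  have h1 : (0 : B) ≤ algebraMap ℝ B ‖x‖ - x := sub_nonneg.2 hx.le_algebraMap_norm_self
  have h2 : (0 : B) ≤ algebraMap ℝ B ‖x‖ + x := by
    have := sub_nonneg.2 hx.neg_algebraMap_norm_le_self
    rwa [sub_neg_eq_add, add_comm] at this
  have e1 := key _ h1
  have e2 := key _ h2
  rw [map_sub, hmap] at e1
  rw [map_add, hmap] at e2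
  simp only [Complex.sub_re, Complex.sub_im, Complex.add_re, Complex.add_im,
    Complex.ofReal_re, Complex.ofReal_im, zero_sub, neg_eq_zero, zero_add] at e1 e2
  refine ⟨Complex.ext (by simp) (by simp [e1.2]), abs_le.2 ⟨by linarith [e2.1], by linarith [e1.1]⟩⟩

private lemma state_norm_le (φ : B →L[ℂ] ℂ) (hφ : IsState φ) : ‖φ‖ ≤ 2 := by
  refine ContinuousLinearMap.opNorm_le_bound φ (by norm_num) fun b => ?_
  have hb : (ℜ b : B) + Complex.I • (ℑ b : B) = b := realPart_add_I_smul_imaginaryPart b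
  have hre := state_apply_selfAdjoint φ hφ (ℜ b).2
  have him := state_apply_selfAdjoint φ hφ (ℑ b).2
  have hφb : φ b = φ (ℜ b : B) + Complex.I * φ (ℑ b : B) := by
    conv_lhs => rw [← hb]
    rw [map_add, map_smul, smul_eq_mul]
  have hnre : ‖φ (ℜ b : B)‖ ≤ ‖(ℜ b : B)‖ := by
    rw [hre.1, Complex.norm_real]; exact hre.2
  have hnim : ‖φ (ℑ b : B)‖ ≤ ‖(ℑ b : B)‖ := by
    rw [him.1, Complex.norm_real]; exact him.2
  have h1 : ‖(ℜ b : B)‖ ≤ ‖b‖ := by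
    rw [realPart_apply_coe]
    calc ‖(2:ℝ)⁻¹ • (b + star b)‖ = (2:ℝ)⁻¹ * ‖b + star b‖ := by
          rw [norm_smul, Real.norm_eq_abs]; norm_num
      _ ≤ (2:ℝ)⁻¹ * (‖b‖ + ‖star b‖) := by
          gcongr; exact norm_add_le _ _
      _ = ‖b‖ := by rw [norm_star]; ring
  have h2 : ‖(ℑ b : B)‖ ≤ ‖b‖ := by
    rw [imaginaryPart_apply_coe, norm_smul, norm_neg, Complex.norm_I, one_mul, norm_smul,
      Real.norm_eq_abs, abs_of_pos (by norm_num : (0:ℝ) < (2:ℝ)⁻¹)]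
    calc (2:ℝ)⁻¹ * ‖b - star b‖ ≤ (2:ℝ)⁻¹ * (‖b‖ + ‖star b‖) := by
          gcongr; exact norm_sub_le _ _
      _ = ‖b‖ := by rw [norm_star]; ring
  calc ‖φ b‖ ≤ ‖φ (ℜ b : B)‖ + ‖Complex.I * φ (ℑ b : B)‖ := by
        rw [hφb]; exact norm_add_le _ _
    _ ≤ ‖b‖ + ‖b‖ := by
        rw [norm_mul, Complex.norm_I, one_mul]
        exact add_le_add (hnre.trans h1) (hnim.trans h2)
    _ = 2 * ‖b‖ := by ring

end StateAux

/-- if the Monge–Kantorovich distance of a densely-defined seminorm `L`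
is bounded by `D` on pure states, then it is bounded by `D` on all states. -/
theorem statement7
    (B : Type*) [NormedRing B] [StarRing B] [CStarRing B]
      [NormedAlgebra ℂ B] [StarModule ℂ B] [CompleteSpace B]
    (L : B → ℝ≥0∞)
    (hL0 : L 0 = 0)
    (hLadd : ∀ a b : B, IsSelfAdjoint a → IsSelfAdjoint b → L (a + b) ≤ L a + L b)
    (hLsmul : ∀ (r : ℝ) (a : B), IsSelfAdjoint a →
      L ((r : ℂ) • a) = ENNReal.ofReal |r| * L a)
    (hdense : ∀ a : B, IsSelfAdjoint a → ∀ ε : ℝ, 0 < ε →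
      ∃ b : B, IsSelfAdjoint b ∧ L b < ⊤ ∧ ‖a - b‖ < ε)
    (D : ℝ≥0∞)
    (hpure : ∀ μ ν : B →L[ℂ] ℂ, IsPureState μ → IsPureState ν → mkDist L μ ν ≤ D) :
    ∀ μ ν : B →L[ℂ] ℂ, IsState μ → IsState ν → mkDist L μ ν ≤ D := by
  intro μ ν hμ hν
  rcases eq_or_ne D ⊤ with rfl | hD
  · exact le_top
  have hd0 : (0:ℝ) ≤ D.toReal := ENNReal.toReal_nonneg
  unfold mkDist
  refine iSup_le fun a => iSup_le fun ha => ?_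
  obtain ⟨hsa, hLa⟩ := ha
  set S : Set (WeakDual ℂ B) := {φ : WeakDual ℂ B | IsState (φ : B →L[ℂ] ℂ)} with hS
  have hμS : (μ : WeakDual ℂ B) ∈ S := hμ
  have hνS : (ν : WeakDual ℂ B) ∈ S := hν
  have hconv : Convex ℝ S := by
    rintro φ hφ ψ hψ s t hs ht hst
    have happ : ∀ b : B, (s • φ + t • ψ : WeakDual ℂ B) b = s • (φ b) + t • (ψ b) := fun b => rfl
    refine ⟨?_, fun b => ?_⟩
    · erw [happ, hφ.1, hψ.1, Complex.real_smul, Complex.real_smul, mul_one, mul_one]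
      exact_mod_cast congrArg (fun r : ℝ => (r : ℂ)) hst
    · have h1 := hφ.2 b
      have h2 := hψ.2 b
      erw [happ]
      simp only [Complex.real_smul, Complex.add_re, Complex.add_im, Complex.mul_re,
        Complex.mul_im, Complex.ofReal_re, Complex.ofReal_im, zero_mul, sub_zero,
        zero_add, add_zero, mul_zero]
      constructor
      · exact add_nonneg (mul_nonneg hs h1.1) (mul_nonneg ht h2.1)
      · erw [h1.2, h2.2]; ring
  have hclosed : IsClosed S := by
    have hSeq : S = {φ : WeakDual ℂ B | φ (1:B) = 1} ∩
        ⋂ b : B, {φ : WeakDual ℂ B | 0 ≤ (φ (star b * b)).re ∧ (φ (star b * b)).im = 0} := by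
      ext φ
      simp only [Set.mem_setOf_eq, Set.mem_inter_iff, Set.mem_iInter, hS]
      exact ⟨fun h => ⟨h.1, h.2⟩, fun h => ⟨h.1, h.2⟩⟩
    rw [hSeq]
    refine (isClosed_eq (WeakDual.eval_continuous _) continuous_const).inter
      (isClosed_iInter fun b => ?_)
    exact (isClosed_le continuous_const
        ((Complex.continuous_re).comp (WeakDual.eval_continuous _))).inter
      (isClosed_eq ((Complex.continuous_im).comp (WeakDual.eval_continuous _)) continuous_const)
  have hcomp : IsCompact S := by
    refine (WeakDual.isCompact_closedBall (0 : StrongDual ℂ B) 2).of_isClosed_subset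
      hclosed fun φ hφ => ?_
    exact Set.mem_preimage.mpr (mem_closedBall_zero_iff.mpr (state_norm_le _ hφ))
  haveI : LocallyConvexSpace ℝ (WeakDual ℂ B) :=
    WeakBilin.locallyConvexSpace (B := topDualPairing ℂ B)
  have hKM : closure (convexHull ℝ (S.extremePoints ℝ)) = S :=
    closure_convexHull_extremePoints hcomp hconv
  let e : WeakDual ℂ B →ₗ[ℝ] ℂ :=
    { toFun := fun φ => φ a, map_add' := fun φ ψ => rfl, map_smul' := fun r φ => rfl }
  have he : Continuous e := WeakDual.eval_continuous a
  set P : Set (WeakDual ℂ B) := S.extremePoints ℝ with hP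
  set T : Set ℂ := e '' P with hT
  have hTd : ∀ z ∈ T, ∀ w ∈ T, dist z w ≤ D.toReal := by
    rintro z ⟨p, hp, rfl⟩ w ⟨q, hq, rfl⟩
    have hmk := hpure (p : B →L[ℂ] ℂ) (q : B →L[ℂ] ℂ) hp hq
    have h2 : ENNReal.ofReal ‖p a - q a‖ ≤ D := by
      refine le_trans ?_ hmk
      unfold mkDist
      exact le_iSup_of_le a (le_iSup_of_le ⟨hsa, hLa⟩ le_rfl)
    rw [dist_eq_norm]
    exact (ENNReal.ofReal_le_iff_le_toReal hD).mp h2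
  have hTb : Bornology.IsBounded T := by
    have hsub : T ⊆ Metric.closedBall (0 : ℂ) (2 * ‖a‖) := by
      rintro z ⟨p, hp, rfl⟩
      have hb : ‖(p : B →L[ℂ] ℂ) a‖ ≤ 2 * ‖a‖ :=
        le_trans ((p : B →L[ℂ] ℂ).le_opNorm a)
          (mul_le_mul_of_nonneg_right (state_norm_le _ hp.1) (norm_nonneg a))
      rw [Metric.mem_closedBall, dist_zero_right]; exact hb
    exact Metric.isBounded_closedBall.subset hsub
  have hdiamT : Metric.diam T ≤ D.toReal := Metric.diam_le_of_forall_dist_le hd0 hTd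
  have hmem : ∀ φ : WeakDual ℂ B, φ ∈ S → e φ ∈ closure (convexHull ℝ T) := by
    intro φ hφ
    have h1 : φ ∈ closure (convexHull ℝ P) := by rw [hKM]; exact hφ
    have h2 : e φ ∈ e '' closure (convexHull ℝ P) := Set.mem_image_of_mem e h1
    have h3 : e '' closure (convexHull ℝ P) ⊆ closure (e '' convexHull ℝ P) :=
      image_closure_subset_closure_image he
    have h4 := h3 h2
    rwa [e.image_convexHull] at h4
  have hbound : ‖μ a - ν a‖ ≤ D.toReal := by
    have hμm := hmem _ hμS
    have hνm := hmem _ hνS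
    have hb : Bornology.IsBounded (closure (convexHull ℝ T)) :=
      (isBounded_convexHull.mpr hTb).closure
    calc ‖μ a - ν a‖ = dist (e (μ : WeakDual ℂ B)) (e (ν : WeakDual ℂ B)) := by
          rw [dist_eq_norm]; rfl
      _ ≤ Metric.diam (closure (convexHull ℝ T)) := Metric.dist_le_diam_of_mem hb hμm hνm
      _ = Metric.diam (convexHull ℝ T) := Metric.diam_closure _
      _ = Metric.diam T := convexHull_diam T
      _ ≤ D.toReal := hdiamT
  calc ENNReal.ofReal ‖μ a - ν a‖ ≤ ENNReal.ofReal D.toReal :=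
        ENNReal.ofReal_le_ofReal hbound
    _ = D := ENNReal.ofReal_toReal hD
end

section
/- Let (X, d_X) be a compact metric space, A a unital C*-algebra, and ‖·‖_n a norm on A with constants M, N > 0 satisfying M‖·‖_n ≤ ‖·‖_A ≤ N‖·‖_n. Then for all states φ, ψ on C(X,A), mk_{L^{(n),C(X)}}(φ,ψ) ≤ 2 + N·diam(X, d_X). Moreover, if A = ℂ, then mk_{L^{(n),C(X)}}(φ,ψ) ≤ N·diam(X, d_X) for all states φ, ψ. -/
open scoped ENNReal

set_option linter.unusedSectionVars false in
lemma re_le_norm' (z : ℂ) : z.re ≤ ‖z‖ := by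
  exact Complex.re_le_norm z

section States

variable {B : Type*} [NormedRing B] [NormedAlgebra ℂ B] [StarRing B] [StarModule ℂ B]

lemma isState_conj (φ : B →L[ℂ] ℂ) (h : IsState φ) (u v : B) :
    φ (star v * u) = (starRingEnd ℂ) (φ (star u * v)) := by
  have key : ∀ w : B, (φ (star w * w)).im = 0 := fun w => (h.2 w).2
  set z := φ (star u * v) with hz
  set w := φ (star v * u) with hw
  have e1 : star (u + v) * (u + v)
      = star u * u + (star u * v + (star v * u + star v * v)) := by
    rw [star_add, add_mul, mul_add, mul_add]; abel
  have h1 : z.im + w.im = 0 := by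
    have := key (u + v)
    rw [e1] at this
    simp only [map_add, Complex.add_im, key u, key v] at this
    linarith
  have e2 : star (u + Complex.I • v) * (u + Complex.I • v)
      = star u * u + (Complex.I • (star u * v) +
        ((-Complex.I) • (star v * u) + star v * v)) := by
    rw [star_add, star_smul]
    simp only [Complex.star_def, Complex.conj_I]
    have hI : Complex.I * ((-1 : ℂ) • Complex.I) = 1 := by
      rw [smul_eq_mul]; ring_nf; rw [Complex.I_sq]; norm_num
    rw [add_mul, mul_add, mul_add]
    simp only [smul_mul_assoc, mul_smul_comm, smul_smul, neg_mul, mul_neg,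
      Complex.I_mul_I, neg_neg, one_smul, hI]
    abel
  have h2 : z.re - w.re = 0 := by
    have := key (u + Complex.I • v)
    rw [e2] at this
    simp only [map_add, map_smul, Complex.add_im, key u, key v, smul_eq_mul,
      Complex.mul_im, Complex.I_re, Complex.I_im, Complex.neg_re, Complex.neg_im] at this
    ring_nf at this ⊢
    linarith
  apply Complex.ext <;> simp [Complex.conj_re, Complex.conj_im] <;> linarith

lemma isState_star_apply (φ : B →L[ℂ] ℂ) (h : IsState φ) (b : B) :
    φ (star b) = (starRingEnd ℂ) (φ b) := by
  have := isState_conj φ h b 1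
  simp only [star_one, one_mul, mul_one] at this
  rw [this]
  simp

lemma isState_cs (φ : B →L[ℂ] ℂ) (h : IsState φ) (v : B) :
    ‖φ v‖ ^ 2 ≤ (φ (star v * v)).re := by
  set p := φ v with hp
  have h0 := (h.2 (v - p • 1)).1
  have e : star (v - p • 1) * (v - p • 1)
      = star v * v - p • star v - (starRingEnd ℂ) p • v
        + ((starRingEnd ℂ) p * p) • (1 : B) := by
    rw [star_sub, star_smul, sub_mul, mul_sub, mul_sub]
    simp only [star_one, one_mul, mul_one, smul_mul_assoc, mul_smul_comm, smul_smul,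
      Complex.star_def]
    module
  rw [e] at h0
  simp only [map_add, map_sub, map_smul, h.1, smul_eq_mul, mul_one,
    isState_star_apply φ h v, ← hp] at h0
  have : (starRingEnd ℂ) p * p = (‖p‖ ^ 2 : ℝ) := by
    rw [mul_comm, Complex.mul_conj]
    norm_cast
    rw [← Complex.sq_norm]
  rw [this] at h0
  simp only [Complex.sub_re, Complex.add_re, Complex.mul_re, Complex.ofReal_re,
    Complex.ofReal_im, Complex.conj_re, Complex.conj_im, mul_neg] at h0
  have hsq : ‖p‖ ^ 2 = p.re * p.re + p.im * p.im := by
    rw [Complex.sq_norm, Complex.normSq_apply]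
  nlinarith [h0, hsq]

end States

section States2
variable {B : Type*} [NormedRing B] [NormedAlgebra ℂ B] [StarRing B] [StarModule ℂ B]
  [CStarRing B]

lemma re_le_norm (z : ℂ) : z.re ≤ ‖z‖ := by
  exact Complex.re_le_norm z

lemma isState_norm_apply_le_selfAdjoint (φ : B →L[ℂ] ℂ) (h : IsState φ) {s : B}
    (hs : IsSelfAdjoint s) : ‖φ s‖ ≤ ‖s‖ := by
  have key : ∀ n : ℕ, ‖φ s‖ ^ 2 ^ n ≤ ‖φ (s ^ 2 ^ n)‖ := by
    intro n
    induction n with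
    | zero => simp
    | succ n ih =>
      have hpow : s ^ 2 ^ n * s ^ 2 ^ n = s ^ 2 ^ (n + 1) := by
        rw [← pow_add]
        congr 1
        rw [pow_succ]
        ring
      have hcs := isState_cs φ h (s ^ 2 ^ n)
      rw [(hs.pow (2 ^ n)).star_eq, hpow] at hcs
      calc ‖φ s‖ ^ 2 ^ (n + 1) = (‖φ s‖ ^ 2 ^ n) ^ 2 := by
            rw [← pow_mul, pow_succ]
        _ ≤ ‖φ (s ^ 2 ^ n)‖ ^ 2 := pow_le_pow_left₀ (by positivity) ih 2
        _ ≤ (φ (s ^ 2 ^ (n + 1))).re := hcs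
        _ ≤ ‖φ (s ^ 2 ^ (n + 1))‖ := re_le_norm _
  have bound : ∀ n : ℕ, ‖φ s‖ ^ 2 ^ n ≤ ‖φ‖ * ‖s‖ ^ 2 ^ n := by
    intro n
    refine (key n).trans ?_
    have h1 := φ.le_opNorm (s ^ 2 ^ n)
    have h2 : ‖s ^ 2 ^ n‖ = ‖s‖ ^ 2 ^ n := by
      have := hs.nnnorm_pow_two_pow n
      rw [← coe_nnnorm, this, NNReal.coe_pow, coe_nnnorm]
    rwa [h2] at h1
  by_cases hz : ‖s‖ = 0
  · have : s = 0 := norm_eq_zero.mp hz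
    simp [this, hz]
  · have hspos : 0 < ‖s‖ := lt_of_le_of_ne (norm_nonneg s) (Ne.symm hz)
    by_contra hlt
    push_neg at hlt
    have hr : 1 < ‖φ s‖ / ‖s‖ := (one_lt_div hspos).2 hlt
    obtain ⟨n, hn⟩ := pow_unbounded_of_one_lt (‖φ‖) hr
    have h2 : (‖φ s‖ / ‖s‖) ^ 2 ^ n ≤ ‖φ‖ := by
      rw [div_pow, div_le_iff₀ (pow_pos hspos _)]
      exact bound n
    have h3 : (‖φ s‖ / ‖s‖) ^ n ≤ (‖φ s‖ / ‖s‖) ^ 2 ^ n :=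
      pow_le_pow_right₀ hr.le (Nat.le_of_lt Nat.lt_two_pow_self)
    linarith

lemma isState_norm_apply_le (φ : B →L[ℂ] ℂ) (h : IsState φ) (u : B) : ‖φ u‖ ≤ ‖u‖ := by
  have h1 := isState_cs φ h u
  have h2 := (re_le_norm (φ (star u * u)))
  have h3 := isState_norm_apply_le_selfAdjoint φ h (IsSelfAdjoint.star_mul_self u)
  have h4 : ‖star u * u‖ = ‖u‖ * ‖u‖ := CStarRing.norm_star_mul_self
  nlinarith [norm_nonneg (φ u), norm_nonneg u]

end States2


section Aux

open scoped Pointwise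

set_option linter.unusedSectionVars false
set_option maxHeartbeats 1000000

variable {X : Type*} [MetricSpace X] [CompactSpace X]
variable {A : Type*} [NormedRing A] [StarRing A] [CStarRing A]
  [NormedAlgebra ℂ A] [StarModule ℂ A] [CompleteSpace A]

lemma lipn_bound {nn : A → ℝ} {a : C(X, A)} (h : lipn nn a ≤ 1) {x y : X}
    (hxy : x ≠ y) : nn (a x - a y) ≤ dist x y := by
  have h1 : ENNReal.ofReal (nn (a x - a y) / dist x y) ≤ 1 := by
    refine le_trans ?_ h
    exact le_iSup₂ (f := fun (p : X × X) (_ : p.1 ≠ p.2) =>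
      ENNReal.ofReal (nn (a p.1 - a p.2) / dist p.1 p.2)) (x, y) hxy
  have h2 := ENNReal.ofReal_le_one.mp h1
  have hd : 0 < dist x y := dist_pos.2 hxy
  calc nn (a x - a y) = nn (a x - a y) / dist x y * dist x y := by field_simp
  _ ≤ 1 * dist x y := mul_le_mul_of_nonneg_right h2 hd.le
  _ = dist x y := one_mul _

lemma isState_one_ne_zero {B : Type*} [NormedRing B] [NormedAlgebra ℂ B] [StarRing B]
    (φ : B →L[ℂ] ℂ) (h : IsState φ) : (1 : B) ≠ 0 := by
  intro h10
  have := h.1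
  rw [h10, map_zero] at this
  exact one_ne_zero this.symm

lemma part1core (nn : A → ℝ) (N : ℝ) (hN : 0 < N)
    (h2 : ∀ x : A, ‖x‖ ≤ N * nn x)
    (φ ψ : C(X, A) →L[ℂ] ℂ) (hφ : IsState φ) (hψ : IsState ψ)
    (a : C(X, A)) (hsa : IsSelfAdjoint a)
    (hlip : lipn nn a ≤ 1) (hq : quotCXA a ≤ 1) :
    ‖φ a - ψ a‖ ≤ 2 + N * Metric.diam (Set.univ : Set X) := by
  have hX : Nonempty X := by
    by_contra hX
    haveI : IsEmpty X := not_nonempty_iff.mp hX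
    exact isState_one_ne_zero φ hφ (ContinuousMap.ext fun x => (IsEmpty.false x).elim)
  haveI hA : Nontrivial A := by
    by_contra h
    rw [not_nontrivial_iff_subsingleton] at h
    exact isState_one_ne_zero φ hφ (ContinuousMap.ext fun x => Subsingleton.elim _ _)
  letI : CStarAlgebra A := {}
  set D := Metric.diam (Set.univ : Set X) with hD
  have hdiam0 : 0 ≤ D := Metric.diam_nonneg
  have h1 : ∀ x y : X, ‖a x - a y‖ ≤ N * D := by
    intro x y
    by_cases hxy : x = y
    · rw [hxy]; simp; positivity
    · calc ‖a x - a y‖ ≤ N * nn (a x - a y) := h2 _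
        _ ≤ N * dist x y := mul_le_mul_of_nonneg_left (lipn_bound hlip hxy) hN.le
        _ ≤ N * D := by
            have := Metric.dist_le_diam_of_mem isCompact_univ.isBounded
              (Set.mem_univ x) (Set.mem_univ y)
            nlinarith
  have hsax : ∀ x, IsSelfAdjoint (a x) := by
    intro x
    have := congrArg (fun f : C(X, A) => f x) hsa.star_eq
    simpa [IsSelfAdjoint] using this
  set Λ : Set ℝ := {r | ∃ x : X, ∃ z ∈ spectrum ℂ (a x), r = z.re} with hΛ
  have hΛne : Λ.Nonempty := by
    obtain ⟨z, hz⟩ := spectrum.nonempty (a (Classical.arbitrary X))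
    exact ⟨z.re, _, z, hz, rfl⟩
  have hΛbd : ∀ r ∈ Λ, |r| ≤ ‖a‖ := by
    rintro r ⟨x, z, hz, rfl⟩
    calc |z.re| ≤ ‖z‖ := Complex.abs_re_le_norm z
      _ = ‖z‖ := rfl
      _ ≤ ‖a x‖ := spectrum.norm_le_norm_of_mem hz
      _ ≤ ‖a‖ := a.norm_coe_le_norm x
  have hbddA : BddAbove Λ := ⟨‖a‖, fun r hr => (abs_le.mp (hΛbd r hr)).2⟩
  have hbddB : BddBelow Λ := ⟨-‖a‖, fun r hr => (abs_le.mp (hΛbd r hr)).1⟩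
  set Sm := sSup Λ with hSm
  set Im := sInf Λ with hIm
  have hImSm : Im ≤ Sm := csInf_le_csSup hΛne hbddB hbddA
  have main : ∀ ε > 0, ‖φ a - ψ a‖ ≤ 2 + N * D + 2 * ε := by
    intro ε hε
    set S : Set ℝ :=
      { r : ℝ | ∃ b : C(X, A), (∀ x, ∃ c : ℂ, b x = c • (1 : A)) ∧ r = ‖a - b‖ } with hS
    have hSne : S.Nonempty := ⟨‖a - 0‖, 0, fun x => ⟨0, by simp⟩, rfl⟩
    have hSbd : BddBelow S := ⟨0, by rintro r ⟨b, hb, rfl⟩; positivity⟩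
    have hlt : sInf S < quotCXA a + ε := by
      have : quotCXA a < quotCXA a + ε := lt_add_of_pos_right _ hε
      exact this
    obtain ⟨r, ⟨b, hbval, rfl⟩, hrlt⟩ := (csInf_lt_iff hSbd hSne).mp hlt
    have hab : ‖a - b‖ < 1 + ε := hrlt.trans_le (by linarith)
    have hpair : ∀ r₁ ∈ Λ, ∀ r₂ ∈ Λ, r₁ - r₂ ≤ N * D + 2 * ‖a - b‖ := by
      rintro r₁ ⟨x₁, z₁, hz₁, rfl⟩ r₂ ⟨x₂, z₂, hz₂, rfl⟩
      obtain ⟨c, hc⟩ := hbval x₂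
      have halg : algebraMap ℂ A c = c • (1 : A) := Algebra.algebraMap_eq_smul_one c
      have hptwise : ∀ x : X, ‖a x - b x‖ ≤ ‖a - b‖ := by
        intro x
        have := (a - b).norm_coe_le_norm x
        rwa [ContinuousMap.sub_apply] at this
      have hm₂ : ‖z₂ - c‖ ≤ ‖a - b‖ := by
        have hmem₂ : z₂ - c ∈ spectrum ℂ (a x₂ - algebraMap ℂ A c) := by
          rw [← spectrum.sub_singleton_eq]
          exact Set.sub_mem_sub hz₂ rfl
        have h5 := spectrum.norm_le_norm_of_mem hmem₂
        rw [halg, ← hc] at h5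
        exact h5.trans (hptwise x₂)
      have hm₁ : ‖z₁ - c‖ ≤ N * D + ‖a - b‖ := by
        have hmem₁ : z₁ - c ∈ spectrum ℂ (a x₁ - algebraMap ℂ A c) := by
          rw [← spectrum.sub_singleton_eq]
          exact Set.sub_mem_sub hz₁ rfl
        have h5 := spectrum.norm_le_norm_of_mem hmem₁
        have h6 : a x₁ - algebraMap ℂ A c = (a x₁ - a x₂) + (a x₂ - algebraMap ℂ A c) := by
          abel
        rw [h6] at h5
        have h7 := norm_add_le (a x₁ - a x₂) (a x₂ - algebraMap ℂ A c)
        have h8 : ‖a x₂ - algebraMap ℂ A c‖ ≤ ‖a - b‖ := by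
          rw [halg, ← hc]; exact hptwise x₂
        have h9 := h1 x₁ x₂
        linarith
      have e1 : z₁.re - z₂.re = (z₁ - c).re + (c - z₂).re := by
        simp [Complex.sub_re]
      have r1 : (z₁ - c).re ≤ ‖z₁ - c‖ := re_le_norm' _
      have r2 : (c - z₂).re ≤ ‖z₂ - c‖ := by
        have := re_le_norm' (c - z₂)
        rwa [norm_sub_rev] at this
      linarith
    have hSI : Sm - Im ≤ N * D + 2 * ‖a - b‖ := by
      have h7 : Sm ≤ Im + (N * D + 2 * ‖a - b‖) := csSup_le hΛne (fun r₁ h₁ => by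
        have h8 : r₁ - (N * D + 2 * ‖a - b‖) ≤ Im :=
          le_csInf hΛne (fun r₂ h₂ => by linarith [hpair r₁ h₁ r₂ h₂])
        linarith)
      linarith
    set c₀ : ℝ := (Sm + Im) / 2 with hc₀
    have hnorm : ‖a - ((c₀ : ℂ)) • (1 : C(X, A))‖ ≤ (Sm - Im) / 2 := by
      rw [ContinuousMap.norm_le _ (by linarith)]
      intro x
      have happ : (a - (c₀ : ℂ) • (1 : C(X, A))) x = a x - algebraMap ℂ A (c₀ : ℂ) := by
        simp [ContinuousMap.sub_apply, Algebra.algebraMap_eq_smul_one]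
      rw [happ]
      set s : A := a x - algebraMap ℂ A (c₀ : ℂ) with hs
      have hssa : IsSelfAdjoint s := by
        rw [hs, Algebra.algebraMap_eq_smul_one]
        refine IsSelfAdjoint.sub (hsax x) ?_
        rw [IsSelfAdjoint, star_smul, star_one, Complex.star_def, Complex.conj_ofReal]
      have claim : ∀ z ∈ spectrum ℂ s, ‖z‖ ≤ (Sm - Im) / 2 := by
        intro z hz
        have hz' : z ∈ spectrum ℂ (a x) - ({((c₀ : ℝ) : ℂ)} : Set ℂ) := by
          rw [spectrum.sub_singleton_eq]
          exact hz
        rw [Set.mem_sub] at hz'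
        obtain ⟨w, hw, u, hu, huw⟩ := hz'
        rw [Set.mem_singleton_iff] at hu
        subst hu
        have hwre : w = (w.re : ℂ) := (hsax x).mem_spectrum_eq_re hw
        have hwΛ : w.re ∈ Λ := ⟨x, w, hw, rfl⟩
        have hle1 : w.re ≤ Sm := le_csSup hbddA hwΛ
        have hle2 : Im ≤ w.re := csInf_le hbddB hwΛ
        rw [← huw]
        calc ‖w - (c₀ : ℂ)‖ = ‖((w.re - c₀ : ℝ) : ℂ)‖ := by
              congr 1
              nth_rewrite 1 [hwre]
              push_cast
              ring
          _ = |w.re - c₀| := Complex.norm_real _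
          _ ≤ (Sm - Im) / 2 := by
              rw [abs_le]
              constructor <;> rw [hc₀] <;> linarith
      have hrad := hssa.spectralRadius_eq_nnnorm
      have hsr : spectralRadius ℂ s ≤ ENNReal.ofReal ((Sm - Im) / 2) := by
        rw [spectralRadius]
        exact iSup₂_le fun z hz => by
          rw [← ENNReal.ofReal_coe_nnreal, coe_nnnorm]
          exact ENNReal.ofReal_le_ofReal (claim z hz)
      rw [hrad, ← ENNReal.ofReal_coe_nnreal, coe_nnnorm] at hsr
      exact (ENNReal.ofReal_le_ofReal_iff (by linarith)).mp hsr
    have hval : ∀ χ : C(X, A) →L[ℂ] ℂ, IsState χ →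
        χ ((c₀ : ℂ) • (1 : C(X, A))) = (c₀ : ℂ) := by
      intro χ hχ
      rw [map_smul, hχ.1, smul_eq_mul, mul_one]
    have hfin : φ a - ψ a
        = φ (a - (c₀ : ℂ) • 1) - ψ (a - (c₀ : ℂ) • 1) := by
      rw [map_sub, map_sub, hval φ hφ, hval ψ hψ]
      ring
    calc ‖φ a - ψ a‖ = ‖φ (a - (c₀ : ℂ) • 1) - ψ (a - (c₀ : ℂ) • 1)‖ := by rw [hfin]
      _ ≤ ‖φ (a - (c₀ : ℂ) • 1)‖ + ‖ψ (a - (c₀ : ℂ) • 1)‖ := norm_sub_le _ _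
      _ ≤ ‖a - (c₀ : ℂ) • 1‖ + ‖a - (c₀ : ℂ) • 1‖ :=
          add_le_add (isState_norm_apply_le φ hφ _) (isState_norm_apply_le ψ hψ _)
      _ ≤ (Sm - Im) / 2 + (Sm - Im) / 2 := add_le_add hnorm hnorm
      _ = Sm - Im := by ring
      _ ≤ N * D + 2 * ‖a - b‖ := hSI
      _ ≤ 2 + N * D + 2 * ε := by linarith
  refine le_of_forall_pos_le_add ?_
  intro ε hε
  have := main (ε / 2) (by linarith)
  linarith

lemma part2core {X : Type*} [MetricSpace X] [CompactSpace X]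
    (nn' : ℂ → ℝ) (N' : ℝ) (hN' : 0 < N')
    (h2 : ∀ z : ℂ, ‖z‖ ≤ N' * nn' z)
    (φ ψ : C(X, ℂ) →L[ℂ] ℂ) (hφ : IsState φ) (hψ : IsState ψ)
    (a : C(X, ℂ)) (hsa : IsSelfAdjoint a) (hlip : lipn nn' a ≤ 1) :
    ‖φ a - ψ a‖ ≤ N' * Metric.diam (Set.univ : Set X) := by
  have hX : Nonempty X := by
    by_contra hX
    haveI : IsEmpty X := not_nonempty_iff.mp hX
    exact isState_one_ne_zero φ hφ (ContinuousMap.ext fun x => (IsEmpty.false x).elim)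
  have hsax : ∀ x, star (a x) = a x := by
    intro x
    have := congrArg (fun f : C(X, ℂ) => f x) hsa.star_eq
    simpa using this
  have hreal : ∀ x, a x = ((a x).re : ℂ) := by
    intro x
    exact (Complex.conj_eq_iff_re.mp (by rw [← Complex.star_def]; exact hsax x)).symm
  set f : X → ℝ := fun x => (a x).re with hf_def
  have hf : Continuous f := Complex.continuous_re.comp a.continuous
  obtain ⟨x₁, -, hx₁'⟩ := isCompact_univ.exists_isMaxOn Set.univ_nonempty hf.continuousOn
  obtain ⟨x₂, -, hx₂'⟩ := isCompact_univ.exists_isMinOn Set.univ_nonempty hf.continuousOn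
  have hx₁ : ∀ x : X, f x ≤ f x₁ := fun x => hx₁' (Set.mem_univ x)
  have hx₂ : ∀ x : X, f x₂ ≤ f x := fun x => hx₂' (Set.mem_univ x)
  have hdiam0 : 0 ≤ Metric.diam (Set.univ : Set X) := Metric.diam_nonneg
  have hosc : f x₁ - f x₂ ≤ N' * Metric.diam (Set.univ : Set X) := by
    by_cases hxy : x₁ = x₂
    · rw [hxy]; simp; positivity
    · have hl := lipn_bound hlip hxy
      have h3 : ‖a x₁ - a x₂‖ ≤ N' * dist x₁ x₂ :=
        (h2 _).trans (mul_le_mul_of_nonneg_left hl hN'.le)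
      have hd : dist x₁ x₂ ≤ Metric.diam (Set.univ : Set X) :=
        Metric.dist_le_diam_of_mem isCompact_univ.isBounded trivial trivial
      have h4 : f x₁ - f x₂ ≤ ‖a x₁ - a x₂‖ := by
        have := re_le_norm' (a x₁ - a x₂)
        simpa [Complex.sub_re] using this
      nlinarith
  have key : ∀ χ : C(X, ℂ) →L[ℂ] ℂ, IsState χ →
      (χ a).im = 0 ∧ f x₂ ≤ (χ a).re ∧ (χ a).re ≤ f x₁ := by
    intro χ hχ
    have hgup : Continuous fun x => ((Real.sqrt (f x₁ - f x) : ℝ) : ℂ) :=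
      Complex.continuous_ofReal.comp (Real.continuous_sqrt.comp (continuous_const.sub hf))
    set gup : C(X, ℂ) := ⟨_, hgup⟩ with hgup_def
    have hequp : star gup * gup = ((f x₁ : ℝ) : ℂ) • (1 : C(X, ℂ)) - a := by
      ext x
      simp only [ContinuousMap.mul_apply, ContinuousMap.star_apply, ContinuousMap.sub_apply,
        ContinuousMap.smul_apply, ContinuousMap.one_apply, smul_eq_mul, mul_one, hgup_def,
        ContinuousMap.coe_mk, Complex.star_def, Complex.conj_ofReal]
      rw [← Complex.ofReal_mul, Real.mul_self_sqrt (sub_nonneg.2 (hx₁ x))]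
      rw [hreal x]
      push_cast
      ring
    have hglow : Continuous fun x => ((Real.sqrt (f x - f x₂) : ℝ) : ℂ) :=
      Complex.continuous_ofReal.comp (Real.continuous_sqrt.comp (hf.sub continuous_const))
    set glow : C(X, ℂ) := ⟨_, hglow⟩ with hglow_def
    have heqlow : star glow * glow = a - ((f x₂ : ℝ) : ℂ) • (1 : C(X, ℂ)) := by
      ext x
      simp only [ContinuousMap.mul_apply, ContinuousMap.star_apply, ContinuousMap.sub_apply,
        ContinuousMap.smul_apply, ContinuousMap.one_apply, smul_eq_mul, mul_one, hglow_def,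
        ContinuousMap.coe_mk, Complex.star_def, Complex.conj_ofReal]
      rw [← Complex.ofReal_mul, Real.mul_self_sqrt (sub_nonneg.2 (hx₂ x))]
      rw [hreal x]
      push_cast
      ring
    have h5 := hχ.2 gup
    rw [hequp] at h5
    have h6 := hχ.2 glow
    rw [heqlow] at h6
    simp only [map_sub, map_smul, hχ.1, smul_eq_mul, mul_one, Complex.sub_re, Complex.sub_im,
      Complex.ofReal_re, Complex.ofReal_im] at h5 h6
    refine ⟨by linarith [h5.2, h6.2], by linarith [h6.1], by linarith [h5.1]⟩
  obtain ⟨hφim, hφlo, hφhi⟩ := key φ hφ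
  obtain ⟨hψim, hψlo, hψhi⟩ := key ψ hψ
  have hz : φ a - ψ a = (((φ a).re - (ψ a).re : ℝ) : ℂ) := by
    apply Complex.ext <;> simp [Complex.sub_re, Complex.sub_im, hφim, hψim]
  rw [hz, Complex.norm_real]
  rw [Real.norm_eq_abs, abs_le]
  constructor <;> linarith

end Aux

/-- the Monge–Kantorovich metric of `L^{(n),C(X)}` is bounded by
`2 + N·diam(X)`; and by `N·diam(X)` when `A = ℂ`. -/
theorem statement8
    (X : Type*) [MetricSpace X] [CompactSpace X]
    (A : Type*) [NormedRing A] [StarRing A] [CStarRing A]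
      [NormedAlgebra ℂ A] [StarModule ℂ A] [CompleteSpace A]
    (nn : A → ℝ) (hnn : IsNormOn A nn) (M N : ℝ) (hM : 0 < M) (hN : 0 < N)
    (hMN : ∀ x : A, M * nn x ≤ ‖x‖ ∧ ‖x‖ ≤ N * nn x) :
    (∀ φ ψ : C(X, A) →L[ℂ] ℂ, IsState φ → IsState ψ →
      mkDist (LCXn nn) φ ψ
        ≤ ENNReal.ofReal (2 + N * Metric.diam (Set.univ : Set X))) ∧
    (∀ nn' : ℂ → ℝ, IsNormOn ℂ nn' → ∀ M' N' : ℝ, 0 < M' → 0 < N' →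
      (∀ z : ℂ, M' * nn' z ≤ ‖z‖ ∧ ‖z‖ ≤ N' * nn' z) →
      ∀ φ ψ : C(X, ℂ) →L[ℂ] ℂ, IsState φ → IsState ψ →
        mkDist (LCXn nn') φ ψ
          ≤ ENNReal.ofReal (N' * Metric.diam (Set.univ : Set X))) := by
  constructor
  · intro φ ψ hφ hψ
    rw [mkDist]
    refine iSup_le fun a => iSup_le fun h => ?_
    have hL := h.2
    rw [LCXn, max_le_iff] at hL
    have hq : quotCXA a ≤ 1 := ENNReal.ofReal_le_one.mp hL.2
    exact ENNReal.ofReal_le_ofReal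
      (part1core nn N hN (fun x => (hMN x).2) φ ψ hφ hψ a h.1 hL.1 hq)
  · intro nn' hnn' M' N' hM' hN' hMN' φ ψ hφ hψ
    rw [mkDist]
    refine iSup_le fun a => iSup_le fun h => ?_
    have hL := h.2
    rw [LCXn, max_le_iff] at hL
    exact ENNReal.ofReal_le_ofReal
      (part2core nn' N' hN' (fun z => (hMN' z).2) φ ψ hφ hψ a h.1 hL.1)
end

section
/- Let (X, d_X) be a compact metric space, A a finite-dimensional unital C*-algebra, ‖·‖_n a norm on A equivalent to the C*-norm, and L any of the seminorms L^{(n),C(X)}, L^{(n),ℂ}, or L^{(n),μ} (μ a state on C(X,A)). Then for every D > 0, the set { a ∈ C(X,A) : a = a*, L(a) ≤ 1, ‖a‖_{C(X,A)} ≤ D } is totally bounded in C(X,A) with respect to the supremum norm. -/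
open scoped ENNReal

private lemma aux_isCompact (X : Type*) [MetricSpace X] [CompactSpace X]
    (A : Type*) [NormedRing A] [StarRing A] [CStarRing A]
      [NormedAlgebra ℂ A] [StarModule ℂ A] [CompleteSpace A]
    [FiniteDimensional ℂ A] (N D : ℝ) (hN : 0 < N) :
    IsCompact { a : C(X, A) | (∀ x y : X, dist (a x) (a y) ≤ N * dist x y) ∧
      ∀ x, a x ∈ Metric.closedBall (0 : A) D } := by
  set T := { a : C(X, A) | (∀ x y : X, dist (a x) (a y) ≤ N * dist x y) ∧
      ∀ x, a x ∈ Metric.closedBall (0 : A) D }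
  apply ArzelaAscoli.isCompact_of_equicontinuous
  · have himg : ContinuousMap.toFun '' T =
        { f : X → A | (∀ x y : X, dist (f x) (f y) ≤ N * dist x y) ∧
          ∀ x, f x ∈ Metric.closedBall (0 : A) D } := by
      ext f
      constructor
      · rintro ⟨a, ha, rfl⟩; exact ha
      · rintro ⟨h1, h2⟩
        have hlip : LipschitzWith ⟨N, hN.le⟩ f := by
          refine LipschitzWith.of_dist_le_mul fun x y => ?_
          exact h1 x y
        exact ⟨⟨f, hlip.continuous⟩, ⟨h1, h2⟩, rfl⟩
    rw [himg]
    apply IsCompact.of_isClosed_subset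
      (isCompact_univ_pi (fun x : X => isCompact_closedBall (0 : A) D))
    · have heq : { f : X → A | (∀ x y : X, dist (f x) (f y) ≤ N * dist x y) ∧
          ∀ x, f x ∈ Metric.closedBall (0 : A) D } =
          (⋂ x, ⋂ y, {f : X → A | dist (f x) (f y) ≤ N * dist x y}) ∩
          (⋂ x, (fun f : X → A => f x) ⁻¹' Metric.closedBall (0 : A) D) := by
        ext f; simp [Set.mem_iInter]
      rw [heq]
      refine IsClosed.inter ?_ ?_
      · refine isClosed_iInter fun x => isClosed_iInter fun y => ?_
        exact isClosed_le (Continuous.dist (continuous_apply x) (continuous_apply y))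
          continuous_const
      · exact isClosed_iInter fun x =>
          (Metric.isClosed_closedBall).preimage (continuous_apply x)
    · intro f hf x _; exact hf.2 x
  · apply Metric.equicontinuous_of_continuity_modulus (fun r => N * r)
    · simpa using (continuous_mul_left N).tendsto' 0 0 (by simp)
    · rintro x y ⟨a, ha⟩; exact ha.1 x y

/-- if `A` is finite-dimensional, then for any of the seminorms
`L^{(n),C(X)}`, `L^{(n),ℂ}`, `L^{(n),μ}`, the set of self-adjoint elements `a` with
`L a ≤ 1` and `‖a‖ ≤ D` is totally bounded. -/
theorem statement10
    (X : Type*) [MetricSpace X] [CompactSpace X]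
    (A : Type*) [NormedRing A] [StarRing A] [CStarRing A]
      [NormedAlgebra ℂ A] [StarModule ℂ A] [CompleteSpace A]
    [FiniteDimensional ℂ A]
    (nn : A → ℝ) (hnn : IsNormOn A nn) (M N : ℝ) (hM : 0 < M) (hN : 0 < N)
    (hMN : ∀ x : A, M * nn x ≤ ‖x‖ ∧ ‖x‖ ≤ N * nn x)
    (L : C(X, A) → ℝ≥0∞)
    (hL : L = LCXn nn ∨ L = LCn nn ∨ ∃ μ : C(X, A) →L[ℂ] ℂ, IsState μ ∧ L = Lmun nn μ) :
    ∀ D : ℝ, 0 < D →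
      TotallyBounded { a : C(X, A) | IsSelfAdjoint a ∧ L a ≤ 1 ∧ ‖a‖ ≤ D } := by
  intro D hD
  have hlipL : ∀ a : C(X, A), lipn nn a ≤ L a := by
    rcases hL with rfl | rfl | ⟨μ, _, rfl⟩ <;> exact fun a => le_max_left _ _
  have hsub : { a : C(X, A) | IsSelfAdjoint a ∧ L a ≤ 1 ∧ ‖a‖ ≤ D } ⊆
      { a : C(X, A) | (∀ x y : X, dist (a x) (a y) ≤ N * dist x y) ∧
        ∀ x, a x ∈ Metric.closedBall (0 : A) D } := by
    rintro a ⟨-, hL1, hnorm⟩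
    refine ⟨fun x y => ?_, fun x => ?_⟩
    · rcases eq_or_ne x y with rfl | hxy
      · simp
      · have h1 : lipn nn a ≤ 1 := (hlipL a).trans hL1
        have h2 : ENNReal.ofReal (nn (a x - a y) / dist x y) ≤ 1 := by
          refine le_trans ?_ h1
          exact le_iSup₂ (f := fun (p : X × X) (_ : p.1 ≠ p.2) =>
            ENNReal.ofReal (nn (a p.1 - a p.2) / dist p.1 p.2)) (x, y) hxy
        have hd : (0 : ℝ) < dist x y := dist_pos.mpr hxy
        have h3 : nn (a x - a y) / dist x y ≤ 1 := ENNReal.ofReal_le_one.mp h2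
        have h4 : nn (a x - a y) ≤ dist x y := (div_le_one hd).mp h3
        calc dist (a x) (a y) = ‖a x - a y‖ := dist_eq_norm _ _
          _ ≤ N * nn (a x - a y) := (hMN _).2
          _ ≤ N * dist x y := by nlinarith
    · simpa using (a.norm_coe_le_norm x).trans hnorm
  exact ((aux_isCompact X A N D hN).totallyBounded).subset hsub
end

section
/- Let (X, d_X) be a compact metric space and A a finite-dimensional unital C*-algebra. Let ‖·‖_n and ‖·‖_m be norms on A (over ℝ or ℂ), and let q and p each be one of the choices C(X), ℂ, or a state μ on C(X,A). Then the seminorms L^{(n),q} and L^{(m),p} are equivalent: there exist constants c, C > 0 such that c·L^{(n),q}(a) ≤ L^{(m),p}(a) ≤ C·L^{(n),q}(a) for all self-adjoint a ∈ C(X,A) (as inequalities in [0,∞]). -/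
open scoped ENNReal

section NormEquiv

variable {A : Type*} [NormedRing A] [NormedAlgebra ℂ A] [CompleteSpace A]
  [FiniteDimensional ℂ A]

lemma IsNormOn.smul_real {nn : A → ℝ} (h : IsNormOn A nn) (r : ℝ) (x : A) :
    nn (r • x) = |r| * nn x := by
  have : (r : ℂ) • x = r • x := by
    rw [← smul_one_smul ℂ r x]; norm_num
  rw [← this, h.2.2.2]

lemma IsNormOn.sum_le {nn : A → ℝ} (h : IsNormOn A nn) {ι : Type*} (s : Finset ι)
    (f : ι → A) : nn (∑ i ∈ s, f i) ≤ ∑ i ∈ s, nn (f i) := by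
  classical
  induction s using Finset.cons_induction with
  | empty =>
    simp only [Finset.sum_empty]
    have : nn (0 : A) = 0 := (h.2.1 0).2 rfl
    simp [this]
  | cons i s hi ih =>
    rw [Finset.sum_cons, Finset.sum_cons]
    exact (h.2.2.1 _ _).trans (by linarith)

lemma IsNormOn.upper {nn : A → ℝ} (h : IsNormOn A nn) :
    ∃ K : ℝ, 0 < K ∧ ∀ v : A, nn v ≤ K * ‖v‖ := by
  classical
  have : FiniteDimensional ℝ A := inferInstance
  set b := Module.finBasis ℝ A with hb
  set n := Module.finrank ℝ A
  set C : ℝ := ∑ i : Fin n, ‖LinearMap.toContinuousLinearMap (b.coord i)‖ * nn (b i) with hC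
  refine ⟨max C 1, lt_of_lt_of_le one_pos (le_max_right _ _), fun v => ?_⟩
  have hv : v = ∑ i : Fin n, b.repr v i • b i := (b.sum_repr v).symm
  calc nn v = nn (∑ i : Fin n, b.repr v i • b i) := by rw [← hv]
    _ ≤ ∑ i : Fin n, nn (b.repr v i • b i) := h.sum_le _ _
    _ ≤ ∑ i : Fin n, (‖LinearMap.toContinuousLinearMap (b.coord i)‖ * nn (b i)) * ‖v‖ := by
        apply Finset.sum_le_sum
        intro i _
        rw [h.smul_real]
        have h1 : |b.repr v i| ≤ ‖LinearMap.toContinuousLinearMap (b.coord i)‖ * ‖v‖ := by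
          have := (LinearMap.toContinuousLinearMap (b.coord i)).le_opNorm v
          simpa [Real.norm_eq_abs] using this
        have h2 : 0 ≤ nn (b i) := h.1 _
        calc |b.repr v i| * nn (b i) ≤ (‖LinearMap.toContinuousLinearMap (b.coord i)‖ * ‖v‖) * nn (b i) :=
              mul_le_mul_of_nonneg_right h1 h2
          _ = (‖LinearMap.toContinuousLinearMap (b.coord i)‖ * nn (b i)) * ‖v‖ := by ring
    _ = C * ‖v‖ := by rw [← Finset.sum_mul]
    _ ≤ max C 1 * ‖v‖ := mul_le_mul_of_nonneg_right (le_max_left _ _) (norm_nonneg _)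

set_option linter.unusedSectionVars false

lemma IsNormOn.neg {nn : A → ℝ} (h : IsNormOn A nn) (x : A) : nn (-x) = nn x := by
  have := h.smul_real (-1) x
  simpa using this

lemma IsNormOn.lower {nn : A → ℝ} (h : IsNormOn A nn) :
    ∃ k : ℝ, 0 < k ∧ ∀ v : A, k * ‖v‖ ≤ nn v := by
  classical
  obtain ⟨K, hK, hKle⟩ := h.upper
  by_cases hs : Subsingleton A
  · refine ⟨1, one_pos, fun v => ?_⟩
    have : v = 0 := Subsingleton.elim v 0
    simp [this, (h.2.1 0).2 rfl]
  · have : Nontrivial A := not_subsingleton_iff_nontrivial.1 hs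
    haveI : ProperSpace A := FiniteDimensional.proper ℂ A
    have hcont : Continuous nn := by
      have : LipschitzWith K.toNNReal nn := by
        apply LipschitzWith.of_dist_le_mul
        intro x y
        have key : ∀ u w : A, nn u - nn w ≤ K * ‖u - w‖ := by
          intro u w
          have := h.2.2.1 (u - w) w
          simp only [sub_add_cancel] at this
          have := hKle (u - w)
          linarith [h.2.2.1 (u - w) w, hKle (u - w)]
        rw [Real.dist_eq, Real.coe_toNNReal _ hK.le]
        rw [abs_sub_le_iff]
        constructor
        · exact (key x y).trans (by rw [← dist_eq_norm])
        · have := key y x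
          rw [norm_sub_rev, ← dist_eq_norm] at this
          exact this
      exact this.continuous
    have hsph : IsCompact (Metric.sphere (0 : A) 1) := isCompact_sphere 0 1
    have hne : (Metric.sphere (0 : A) 1).Nonempty := by
      have : (1 : ℝ) ≤ 1 := le_refl 1
      exact NormedSpace.sphere_nonempty.2 zero_le_one
    obtain ⟨v₀, hv₀mem, hv₀min⟩ := hsph.exists_isMinOn hne (hcont.continuousOn)
    have hv₀norm : ‖v₀‖ = 1 := by simpa using hv₀mem
    have hv₀ne : v₀ ≠ 0 := by
      intro hz; rw [hz] at hv₀norm; simp at hv₀norm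
    have hk : 0 < nn v₀ := by
      rcases lt_or_eq_of_le (h.1 v₀) with h' | h'
      · exact h'
      · exact absurd ((h.2.1 v₀).1 h'.symm) hv₀ne
    refine ⟨nn v₀, hk, fun v => ?_⟩
    by_cases hv : v = 0
    · simp [hv, (h.2.1 0).2 rfl]
    · have hvn : 0 < ‖v‖ := norm_pos_iff.2 hv
      have hu : (‖v‖⁻¹ • v) ∈ Metric.sphere (0 : A) 1 := by
        simp [norm_smul, abs_of_pos (inv_pos.2 hvn), inv_mul_cancel₀ hvn.ne']
      have this : nn v₀ ≤ nn (‖v‖⁻¹ • v) := hv₀min hu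
      have heq : nn (‖v‖⁻¹ • v) = ‖v‖⁻¹ * nn v := by
        rw [h.smul_real, abs_of_pos (inv_pos.2 hvn)]
      rw [heq] at this
      calc nn v₀ * ‖v‖ ≤ (‖v‖⁻¹ * nn v) * ‖v‖ := mul_le_mul_of_nonneg_right this hvn.le
        _ = nn v := by field_simp

end NormEquiv

section Quot
variable {X : Type*} [MetricSpace X] [CompactSpace X]
variable {A : Type*} [NormedRing A] [StarRing A] [CStarRing A]
  [NormedAlgebra ℂ A] [StarModule ℂ A] [CompleteSpace A]

set_option linter.unusedSectionVars false

lemma quotS_nonempty (a : C(X, A)) :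
    { r : ℝ | ∃ b : C(X, A), (∀ x, ∃ c : ℂ, b x = c • (1 : A)) ∧ r = ‖a - b‖ }.Nonempty :=
  ⟨‖a - 0‖, 0, fun x => ⟨0, by simp⟩, rfl⟩

lemma quotS_bdd (a : C(X, A)) :
    BddBelow { r : ℝ | ∃ b : C(X, A), (∀ x, ∃ c : ℂ, b x = c • (1 : A)) ∧ r = ‖a - b‖ } := by
  refine ⟨0, fun r hr => ?_⟩
  obtain ⟨b, -, rfl⟩ := hr
  exact norm_nonneg _

lemma quotCXA_nonneg (a : C(X, A)) : 0 ≤ quotCXA a :=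
  le_csInf (quotS_nonempty a) (fun r hr => by obtain ⟨b, -, rfl⟩ := hr; exact norm_nonneg _)

lemma quotC_nonneg (a : C(X, A)) : 0 ≤ quotC a :=
  le_ciInf fun c => norm_nonneg _

lemma quotC_le (a : C(X, A)) (c : ℂ) : quotC a ≤ ‖a - c • (1 : C(X, A))‖ :=
  ciInf_le ⟨0, fun r ⟨c', hc'⟩ => hc' ▸ norm_nonneg _⟩ c

lemma quotCXA_le_quotC (a : C(X, A)) : quotCXA a ≤ quotC a := by
  apply le_ciInf
  intro c
  apply csInf_le (quotS_bdd a)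
  exact ⟨c • (1 : C(X, A)), fun x => ⟨c, by simp⟩, rfl⟩

lemma quotC_le_state (a : C(X, A)) (μ : C(X, A) →L[ℂ] ℂ) :
    quotC a ≤ ‖a - μ a • (1 : C(X, A))‖ := quotC_le a (μ a)

/-- the state-version is dominated by quotC -/
lemma state_le_quotC (a : C(X, A)) (μ : C(X, A) →L[ℂ] ℂ) (hμ : μ 1 = 1) :
    ‖a - μ a • (1 : C(X, A))‖ ≤ (1 + ‖μ‖ * ‖(1 : C(X, A))‖) * quotC a := by
  have hM : (0:ℝ) ≤ 1 + ‖μ‖ * ‖(1 : C(X, A))‖ := by positivity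
  have key : ∀ c : ℂ, ‖a - μ a • (1 : C(X, A))‖ ≤
      (1 + ‖μ‖ * ‖(1 : C(X, A))‖) * ‖a - c • (1 : C(X, A))‖ := by
    intro c
    have hdecomp : a - μ a • (1 : C(X, A)) =
        (a - c • (1 : C(X, A))) + (c - μ a) • (1 : C(X, A)) := by
      rw [sub_smul]; abel
    have h2 : ‖(c - μ a) • (1 : C(X, A))‖ = ‖c - μ a‖ * ‖(1 : C(X, A))‖ := norm_smul _ _
    have h3 : c - μ a = μ (c • (1 : C(X, A)) - a) := by
      rw [map_sub, map_smul, hμ, smul_eq_mul, mul_one]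
    have h4 : ‖c - μ a‖ ≤ ‖μ‖ * ‖a - c • (1 : C(X, A))‖ := by
      rw [h3]
      calc ‖μ (c • (1 : C(X, A)) - a)‖ ≤ ‖μ‖ * ‖c • (1 : C(X, A)) - a‖ := μ.le_opNorm _
        _ = ‖μ‖ * ‖a - c • (1 : C(X, A))‖ := by rw [norm_sub_rev]
    calc ‖a - μ a • (1 : C(X, A))‖
        ≤ ‖a - c • (1 : C(X, A))‖ + ‖(c - μ a) • (1 : C(X, A))‖ := by
          rw [hdecomp]; exact norm_add_le _ _
      _ ≤ ‖a - c • (1 : C(X, A))‖ + (‖μ‖ * ‖a - c • (1 : C(X, A))‖) * ‖(1 : C(X, A))‖ := by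
          rw [h2]; gcongr
      _ = (1 + ‖μ‖ * ‖(1 : C(X, A))‖) * ‖a - c • (1 : C(X, A))‖ := by ring
  -- pass to inf
  by_cases hz : 1 + ‖μ‖ * ‖(1 : C(X, A))‖ = 0
  · have h0 := key 0
    rw [hz, zero_mul] at h0
    rw [hz, zero_mul]
    exact h0
  · have hMpos : 0 < 1 + ‖μ‖ * ‖(1 : C(X, A))‖ := lt_of_le_of_ne hM (Ne.symm hz)
    rw [mul_comm]
    rw [← div_le_iff₀ hMpos]
    apply le_ciInf
    intro c
    rw [div_le_iff₀ hMpos, mul_comm]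
    exact key c
end Quot

section Lip
variable {X : Type*} [MetricSpace X] [CompactSpace X]
variable {A : Type*} [NormedRing A] [StarRing A] [CStarRing A]
  [NormedAlgebra ℂ A] [StarModule ℂ A] [CompleteSpace A]

set_option linter.unusedSectionVars false

/-- comparison of lipn for two comparable norms -/
lemma lipn_le_lipn {nn mm : A → ℝ} {K : ℝ} (hK : 0 ≤ K)
    (hle : ∀ v, mm v ≤ K * nn v) (a : C(X, A)) :
    lipn mm a ≤ ENNReal.ofReal K * lipn nn a := by
  rw [lipn]
  apply iSup₂_le
  intro p hp
  have hd : 0 < dist p.1 p.2 := dist_pos.2 hp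
  have h1 : mm (a p.1 - a p.2) / dist p.1 p.2 ≤ K * (nn (a p.1 - a p.2) / dist p.1 p.2) := by
    rw [mul_div_assoc']
    exact div_le_div_of_nonneg_right (hle _) hd.le |>.trans_eq rfl
  calc ENNReal.ofReal (mm (a p.1 - a p.2) / dist p.1 p.2)
      ≤ ENNReal.ofReal (K * (nn (a p.1 - a p.2) / dist p.1 p.2)) := ENNReal.ofReal_le_ofReal h1
    _ = ENNReal.ofReal K * ENNReal.ofReal (nn (a p.1 - a p.2) / dist p.1 p.2) :=
        ENNReal.ofReal_mul hK
    _ ≤ ENNReal.ofReal K * lipn nn a := by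
        gcongr
        exact le_iSup₂ (f := fun (p : X × X) (_ : p.1 ≠ p.2) =>
          ENNReal.ofReal (nn (a p.1 - a p.2) / dist p.1 p.2)) p hp

/-- pointwise Lipschitz bound from finite lipn -/
lemma lipn_pointwise {nn : A → ℝ} (hn0 : nn 0 = 0) (a : C(X, A))
    (hfin : lipn nn a ≠ ⊤) (x y : X) :
    nn (a x - a y) ≤ (lipn nn a).toReal * dist x y := by
  by_cases hxy : x = y
  · subst hxy
    simp only [sub_self, dist_self, mul_zero]
    exact le_of_eq hn0
  · have hd : 0 < dist x y := dist_pos.2 hxy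
    have h1 : ENNReal.ofReal (nn (a x - a y) / dist x y) ≤ lipn nn a :=
      le_iSup₂ (f := fun (p : X × X) (_ : p.1 ≠ p.2) =>
        ENNReal.ofReal (nn (a p.1 - a p.2) / dist p.1 p.2)) (x, y) hxy
    have h2 : nn (a x - a y) / dist x y ≤ (lipn nn a).toReal := by
      rw [← ENNReal.ofReal_le_iff_le_toReal hfin] at *
      exact h1
    calc nn (a x - a y) = (nn (a x - a y) / dist x y) * dist x y := by field_simp
      _ ≤ (lipn nn a).toReal * dist x y := mul_le_mul_of_nonneg_right h2 hd.le

/-- quotC in terms of quotCXA plus Lipschitz term -/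
lemma quotC_le_quotCXA (a : C(X, A)) {ℓ : ℝ} (hℓ : 0 ≤ ℓ)
    (hlip : ∀ x y : X, ‖a x - a y‖ ≤ ℓ * dist x y) :
    quotC a ≤ 3 * quotCXA a + ℓ * Metric.diam (Set.univ : Set X) := by
  by_cases hX : Nonempty X
  · obtain ⟨x₀⟩ := hX
    have hdiam : ∀ x y : X, dist x y ≤ Metric.diam (Set.univ : Set X) := fun x y =>
      Metric.dist_le_diam_of_mem (isCompact_univ.isBounded) (Set.mem_univ x) (Set.mem_univ y)
    have hdiam0 : 0 ≤ Metric.diam (Set.univ : Set X) := Metric.diam_nonneg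
    apply le_of_forall_pos_le_add
    intro ε hε
    obtain ⟨r, hrS, hrlt⟩ := Real.lt_sInf_add_pos (quotS_nonempty a) (div_pos hε (by norm_num : (0:ℝ) < 3))
    obtain ⟨b, hb, rfl⟩ := hrS
    obtain ⟨c₀, hc₀⟩ := hb x₀
    have hptwise : ∀ x : X, ‖(a - c₀ • (1 : C(X, A))) x‖ ≤
        3 * ‖a - b‖ + ℓ * Metric.diam (Set.univ : Set X) := by
      intro x
      have e1 : (a - c₀ • (1 : C(X, A))) x = a x - c₀ • (1 : A) := by simp
      have e2 : a x - c₀ • (1 : A) = (a x - b x) + (b x - b x₀) := by rw [hc₀]; abel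
      have key1 : ∀ z : X, ‖a z - b z‖ ≤ ‖a - b‖ := by
        intro z
        have := ContinuousMap.norm_coe_le_norm (a - b) z
        simpa using this
      have key2 : ‖b x - b x₀‖ ≤ 2 * ‖a - b‖ + ℓ * Metric.diam (Set.univ : Set X) := by
        have e3 : b x - b x₀ = -(a x - b x) + (a x - a x₀) + (a x₀ - b x₀) := by abel
        calc ‖b x - b x₀‖ = ‖-(a x - b x) + (a x - a x₀) + (a x₀ - b x₀)‖ := by rw [e3]
          _ ≤ ‖-(a x - b x) + (a x - a x₀)‖ + ‖a x₀ - b x₀‖ := norm_add_le _ _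
          _ ≤ ‖-(a x - b x)‖ + ‖a x - a x₀‖ + ‖a x₀ - b x₀‖ := by
              gcongr; exact norm_add_le _ _
          _ ≤ ‖a - b‖ + ℓ * Metric.diam (Set.univ : Set X) + ‖a - b‖ := by
              rw [norm_neg]
              gcongr
              · exact key1 x
              · exact (hlip x x₀).trans (mul_le_mul_of_nonneg_left (hdiam x x₀) hℓ)
              · exact key1 x₀
          _ = 2 * ‖a - b‖ + ℓ * Metric.diam (Set.univ : Set X) := by ring
      calc ‖(a - c₀ • (1 : C(X, A))) x‖ = ‖(a x - b x) + (b x - b x₀)‖ := by rw [e1, e2]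
        _ ≤ ‖a x - b x‖ + ‖b x - b x₀‖ := norm_add_le _ _
        _ ≤ ‖a - b‖ + (2 * ‖a - b‖ + ℓ * Metric.diam (Set.univ : Set X)) := by
            gcongr; exact key1 x
        _ = 3 * ‖a - b‖ + ℓ * Metric.diam (Set.univ : Set X) := by ring
    have hnorm : ‖a - c₀ • (1 : C(X, A))‖ ≤ 3 * ‖a - b‖ + ℓ * Metric.diam (Set.univ : Set X) := by
      apply ContinuousMap.norm_le _ (by positivity) |>.2
      exact hptwise
    calc quotC a ≤ ‖a - c₀ • (1 : C(X, A))‖ := quotC_le a c₀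
      _ ≤ 3 * ‖a - b‖ + ℓ * Metric.diam (Set.univ : Set X) := hnorm
      _ ≤ 3 * (quotCXA a + ε / 3) + ℓ * Metric.diam (Set.univ : Set X) := by
          gcongr
          exact hrlt.le
      _ = 3 * quotCXA a + ℓ * Metric.diam (Set.univ : Set X) + ε := by ring
  · -- X empty
    have : quotC a ≤ ‖a - (0:ℂ) • (1 : C(X, A))‖ := quotC_le a 0
    have hz : ‖a - (0:ℂ) • (1 : C(X, A))‖ = 0 := by
      rw [norm_eq_zero]
      ext x
      exact absurd ⟨x⟩ hX
    have h0 : quotC a ≤ 0 := by rw [hz] at this; exact this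
    have := quotCXA_nonneg a
    nlinarith [mul_nonneg hℓ (Metric.diam_nonneg (s := (Set.univ : Set X)))]
end Lip


lemma oneSided
    (X : Type*) [MetricSpace X] [CompactSpace X]
    (A : Type*) [NormedRing A] [StarRing A] [CStarRing A]
      [NormedAlgebra ℂ A] [StarModule ℂ A] [CompleteSpace A]
    [FiniteDimensional ℂ A]
    (nn mm : A → ℝ) (hnn : IsNormOn A nn) (hmm : IsNormOn A mm)
    (L₁ L₂ : C(X, A) → ℝ≥0∞)
    (hL₁ : L₁ = LCXn nn ∨ L₁ = LCn nn ∨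
      ∃ μ : C(X, A) →L[ℂ] ℂ, IsState μ ∧ L₁ = Lmun nn μ)
    (hL₂ : L₂ = LCXn mm ∨ L₂ = LCn mm ∨
      ∃ μ : C(X, A) →L[ℂ] ℂ, IsState μ ∧ L₂ = Lmun mm μ) :
    ∃ C : ℝ, 0 < C ∧ ∀ a : C(X, A), L₂ a ≤ ENNReal.ofReal C * L₁ a := by
  obtain ⟨k₁, hk₁, hk₁le⟩ := hnn.lower
  obtain ⟨K₂, hK₂, hK₂le⟩ := hmm.upper
  set D := Metric.diam (Set.univ : Set X) with hDdef
  have hD : 0 ≤ D := Metric.diam_nonneg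
  -- lipn comparison
  have hKlip : ∀ v, mm v ≤ (K₂ / k₁) * nn v := by
    intro v
    have h1 := hK₂le v
    have h2 := hk₁le v
    rw [div_mul_eq_mul_div, le_div_iff₀ hk₁]
    nlinarith
  have hlip2 : ∀ a : C(X, A), lipn mm a ≤ ENNReal.ofReal (K₂ / k₁) * lipn nn a :=
    fun a => lipn_le_lipn (by positivity) hKlip a
  -- quotC in terms of max(lipn nn, quotCXA)
  have hquotC : ∀ a : C(X, A), ENNReal.ofReal (quotC a) ≤
      ENNReal.ofReal (3 + D / k₁) * max (lipn nn a) (ENNReal.ofReal (quotCXA a)) := by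
    intro a
    by_cases hfin : lipn nn a = ⊤
    · have hmax : max (lipn nn a) (ENNReal.ofReal (quotCXA a)) = ⊤ := by
        rw [hfin]; exact max_eq_left le_top
      rw [hmax, ENNReal.mul_top]
      · exact le_top
      · exact (ENNReal.ofReal_pos.2 (by positivity)).ne'
    · have hn0 : nn 0 = 0 := (hnn.2.1 0).2 rfl
      have hpt := lipn_pointwise hn0 a hfin
      set t := (lipn nn a).toReal with ht
      have htnn : 0 ≤ t := ENNReal.toReal_nonneg
      have hlipR : ∀ x y : X, ‖a x - a y‖ ≤ (t / k₁) * dist x y := by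
        intro x y
        have h1 := hpt x y
        have h2 := hk₁le (a x - a y)
        rw [div_mul_eq_mul_div, le_div_iff₀ hk₁]
        nlinarith [dist_nonneg (x := x) (y := y)]
      have hq := quotC_le_quotCXA a (div_nonneg htnn hk₁.le) hlipR
      set M := max (lipn nn a) (ENNReal.ofReal (quotCXA a)) with hM
      have e3 : ENNReal.ofReal t = lipn nn a := ENNReal.ofReal_toReal hfin
      calc ENNReal.ofReal (quotC a)
          ≤ ENNReal.ofReal (3 * quotCXA a + (t / k₁) * D) := ENNReal.ofReal_le_ofReal hq
        _ ≤ ENNReal.ofReal (3 * quotCXA a) + ENNReal.ofReal ((D / k₁) * t) := by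
            rw [show (t / k₁) * D = (D / k₁) * t by ring]
            exact ENNReal.ofReal_add_le
        _ = ENNReal.ofReal 3 * ENNReal.ofReal (quotCXA a)
              + ENNReal.ofReal (D / k₁) * ENNReal.ofReal t := by
            rw [ENNReal.ofReal_mul (by norm_num : (0:ℝ) ≤ 3),
              ENNReal.ofReal_mul (div_nonneg hD hk₁.le)]
        _ ≤ ENNReal.ofReal 3 * M + ENNReal.ofReal (D / k₁) * M := by
            gcongr
            · exact le_max_right _ _
            · rw [e3]; exact le_max_left _ _
        _ = (ENNReal.ofReal 3 + ENNReal.ofReal (D / k₁)) * M := (add_mul _ _ _).symm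
        _ = ENNReal.ofReal (3 + D / k₁) * M := by
            rw [ENNReal.ofReal_add (by norm_num : (0:ℝ) ≤ 3) (div_nonneg hD hk₁.le)]
  -- lower bounds: components of L₁
  have hF1a : ∀ a : C(X, A), lipn nn a ≤ L₁ a := by
    rcases hL₁ with rfl | rfl | ⟨μ, hμ, rfl⟩ <;> intro a <;> exact le_max_left _ _
  have hF1b : ∀ a : C(X, A), ENNReal.ofReal (quotCXA a) ≤ L₁ a := by
    rcases hL₁ with rfl | rfl | ⟨μ, hμ, rfl⟩ <;> intro a
    · exact le_max_right _ _
    · exact le_trans (ENNReal.ofReal_le_ofReal (quotCXA_le_quotC a)) (le_max_right _ _)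
    · exact le_trans (ENNReal.ofReal_le_ofReal
        ((quotCXA_le_quotC a).trans (quotC_le_state a μ))) (le_max_right _ _)
  have hmaxle : ∀ a : C(X, A),
      max (lipn nn a) (ENNReal.ofReal (quotCXA a)) ≤ L₁ a :=
    fun a => max_le (hF1a a) (hF1b a)
  -- now the three cases for L₂
  have hlipbound : ∀ (C : ℝ), K₂ / k₁ ≤ C → ∀ a : C(X, A),
      lipn mm a ≤ ENNReal.ofReal C * L₁ a := by
    intro C hC a
    exact (hlip2 a).trans (mul_le_mul' (ENNReal.ofReal_le_ofReal hC) (hF1a a))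
  rcases hL₂ with rfl | rfl | ⟨μ, hμ, rfl⟩
  · refine ⟨max (K₂ / k₁) 1, lt_of_lt_of_le one_pos (le_max_right _ _), fun a => ?_⟩
    apply max_le
    · exact hlipbound _ (le_max_left _ _) a
    · calc ENNReal.ofReal (quotCXA a) ≤ L₁ a := hF1b a
        _ = 1 * L₁ a := (one_mul _).symm
        _ ≤ ENNReal.ofReal (max (K₂ / k₁) 1) * L₁ a := by
            gcongr
            rw [show (1 : ℝ≥0∞) = ENNReal.ofReal 1 by simp]
            exact ENNReal.ofReal_le_ofReal (le_max_right _ _)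
  · refine ⟨max (K₂ / k₁) (3 + D / k₁), ?_, fun a => ?_⟩
    · have : (0:ℝ) < 3 + D / k₁ := by positivity
      exact lt_of_lt_of_le this (le_max_right _ _)
    apply max_le
    · exact hlipbound _ (le_max_left _ _) a
    · calc ENNReal.ofReal (quotC a)
          ≤ ENNReal.ofReal (3 + D / k₁) * max (lipn nn a) (ENNReal.ofReal (quotCXA a)) :=
            hquotC a
        _ ≤ ENNReal.ofReal (max (K₂ / k₁) (3 + D / k₁)) * L₁ a :=
            mul_le_mul' (ENNReal.ofReal_le_ofReal (le_max_right _ _)) (hmaxle a)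
  · set Kμ : ℝ := 1 + ‖μ‖ * ‖(1 : C(X, A))‖ with hKμdef
    have hKμ : 0 < Kμ := by positivity
    refine ⟨max (K₂ / k₁) (Kμ * (3 + D / k₁)), ?_, fun a => ?_⟩
    · have : (0:ℝ) < Kμ * (3 + D / k₁) := by positivity
      exact lt_of_lt_of_le this (le_max_right _ _)
    apply max_le
    · exact hlipbound _ (le_max_left _ _) a
    · have h1 : ‖a - μ a • (1 : C(X, A))‖ ≤ Kμ * quotC a := state_le_quotC a μ hμ.1
      calc ENNReal.ofReal ‖a - μ a • (1 : C(X, A))‖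
          ≤ ENNReal.ofReal (Kμ * quotC a) := ENNReal.ofReal_le_ofReal h1
        _ = ENNReal.ofReal Kμ * ENNReal.ofReal (quotC a) := ENNReal.ofReal_mul hKμ.le
        _ ≤ ENNReal.ofReal Kμ * (ENNReal.ofReal (3 + D / k₁)
              * max (lipn nn a) (ENNReal.ofReal (quotCXA a))) :=
            mul_le_mul' le_rfl (hquotC a)
        _ = ENNReal.ofReal (Kμ * (3 + D / k₁))
              * max (lipn nn a) (ENNReal.ofReal (quotCXA a)) := by
            rw [ENNReal.ofReal_mul hKμ.le, mul_assoc]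
        _ ≤ ENNReal.ofReal (max (K₂ / k₁) (Kμ * (3 + D / k₁))) * L₁ a :=
            mul_le_mul' (ENNReal.ofReal_le_ofReal (le_max_right _ _)) (hmaxle a)


/-- for a finite-dimensional `A`, any two of the seminorms
`L^{(n),q}` and `L^{(m),p}` (with `q, p` among `C(X)`, `ℂ`, or a state `μ`) are
equivalent on self-adjoint elements. -/
theorem statement14
    (X : Type*) [MetricSpace X] [CompactSpace X]
    (A : Type*) [NormedRing A] [StarRing A] [CStarRing A]
      [NormedAlgebra ℂ A] [StarModule ℂ A] [CompleteSpace A]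
    [FiniteDimensional ℂ A]
    (nn mm : A → ℝ) (hnn : IsNormOn A nn) (hmm : IsNormOn A mm)
    (L₁ L₂ : C(X, A) → ℝ≥0∞)
    (hL₁ : L₁ = LCXn nn ∨ L₁ = LCn nn ∨
      ∃ μ : C(X, A) →L[ℂ] ℂ, IsState μ ∧ L₁ = Lmun nn μ)
    (hL₂ : L₂ = LCXn mm ∨ L₂ = LCn mm ∨
      ∃ μ : C(X, A) →L[ℂ] ℂ, IsState μ ∧ L₂ = Lmun mm μ) :
    ∃ c C : ℝ, 0 < c ∧ 0 < C ∧ ∀ a : C(X, A), IsSelfAdjoint a →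
      ENNReal.ofReal c * L₁ a ≤ L₂ a ∧ L₂ a ≤ ENNReal.ofReal C * L₁ a := by
  obtain ⟨C, hC, hCle⟩ := oneSided X A nn mm hnn hmm L₁ L₂ hL₁ hL₂
  obtain ⟨C', hC', hC'le⟩ := oneSided X A mm nn hmm hnn L₂ L₁ hL₂ hL₁
  refine ⟨1 / C', C, by positivity, hC, fun a _ => ⟨?_, hCle a⟩⟩
  calc ENNReal.ofReal (1 / C') * L₁ a
      ≤ ENNReal.ofReal (1 / C') * (ENNReal.ofReal C' * L₂ a) :=
        mul_le_mul' le_rfl (hC'le a)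
    _ = ENNReal.ofReal ((1 / C') * C') * L₂ a := by
        rw [ENNReal.ofReal_mul (by positivity), mul_assoc]
    _ = L₂ a := by
        rw [one_div, inv_mul_cancel₀ hC'.ne', ENNReal.ofReal_one, one_mul]
end

section
/- Let (X, d_X) be a compact metric space and A = ⊕_{k=0}^n M_{m_k}(ℂ). Let μ be a state on A and define μ_x : C(X,A) → ℂ by μ_x(a) = μ(a(x)), so μ_x is a state on C(X,A), and let Δ_μ : X → S(C(X,A)) be x ↦ μ_x. Then: (1) Δ_μ is a homeomorphism onto its image when S(C(X,A)) carries the weak-* topology; (2) for any norm ‖·‖_𝗇 on A with constants M, N > 0 satisfying M‖·‖_𝗇 ≤ ‖·‖_A ≤ N‖·‖_𝗇, any choice q ∈ {C(X), ℂ, ν} (ν a state on C(X,A)), and all x, y ∈ X, mk_{L^{(𝗇),q}}(μ_x, μ_y) ≤ N·k_μ·d_X(x,y), where k_μ = Σ_{k=0}^n Σ_{p,q=1}^{m_k} |μ(e_{k,(p,q)})|. -/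
open scoped ENNReal
set_option synthInstance.maxHeartbeats 1000000
set_option maxHeartbeats 1000000

open scoped Matrix.Norms.L2Operator

section MatrixDefs

variable {n : ℕ} {m : Fin (n + 1) → ℕ}

/-- The matrix unit `e_{k,(p,q)}` of `⊕_k M_{m_k}(ℂ)`. -/
noncomputable def matUnit (k : Fin (n + 1)) (p q : Fin (m k)) :
    Π j : Fin (n + 1), Matrix (Fin (m j)) (Fin (m j)) ℂ :=
  Pi.single k (Matrix.single p q 1)

/-- The constant `k_μ = Σ_k Σ_{p,q} |μ(e_{k,(p,q)})|` associated to a state `μ`. -/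
noncomputable def kConst
    (μ : (Π j : Fin (n + 1), Matrix (Fin (m j)) (Fin (m j)) ℂ) →L[ℂ] ℂ) : ℝ :=
  ∑ k : Fin (n + 1), ∑ p : Fin (m k), ∑ q : Fin (m k), ‖μ (matUnit k p q)‖

/-- The functional `μ_x : a ↦ μ (a x)` on `C(X, ⊕_k M_{m_k}(ℂ))`. -/
noncomputable def stateAt {X : Type*} [MetricSpace X] [CompactSpace X]
    (μ : (Π j : Fin (n + 1), Matrix (Fin (m j)) (Fin (m j)) ℂ) →L[ℂ] ℂ) (x : X) :
    C(X, Π j : Fin (n + 1), Matrix (Fin (m j)) (Fin (m j)) ℂ) →L[ℂ] ℂ :=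
  μ.comp (ContinuousMap.evalCLM ℂ x)

/-- The tracial state `tr_v = ⊕_k v_k tr_{m_k}` on `⊕_k M_{m_k}(ℂ)`. -/
noncomputable def trV (v : Fin (n + 1) → ℝ) :
    (Π j : Fin (n + 1), Matrix (Fin (m j)) (Fin (m j)) ℂ) →L[ℂ] ℂ :=
  LinearMap.toContinuousLinearMap
    { toFun := fun a => ∑ k : Fin (n + 1), ((v k : ℂ) / (m k : ℂ)) * (a k).trace
      map_add' := by
        intro a b
        simp [Matrix.trace_add, mul_add, Finset.sum_add_distrib]
      map_smul' := by
        intro c a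
        simp only [Pi.smul_apply, Matrix.trace_smul, smul_eq_mul, RingHom.id_apply,
          Finset.mul_sum]
        exact Finset.sum_congr rfl fun k _ => by ring }

end MatrixDefs

namespace Statement15Aux

open scoped Matrix.Norms.L2Operator

lemma eucl_coord_le {r : ℕ} (w : EuclideanSpace ℂ (Fin r)) (p : Fin r) : ‖w p‖ ≤ ‖w‖ := by
  rw [EuclideanSpace.norm_eq]
  calc ‖w p‖ = Real.sqrt (‖w p‖^2) := (Real.sqrt_sq (norm_nonneg _)).symm
    _ ≤ _ := Real.sqrt_le_sqrt (Finset.single_le_sum (f := fun i => ‖w i‖^2)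
        (fun i _ => sq_nonneg _) (Finset.mem_univ p))

lemma entry_le {r : ℕ} (M : Matrix (Fin r) (Fin r) ℂ) (p q : Fin r) : ‖M p q‖ ≤ ‖M‖ := by
  have hv : ‖(EuclideanSpace.single q (1:ℂ))‖ = 1 := by simp [EuclideanSpace.norm_single]
  have h1 := M.l2_opNorm_mulVec (EuclideanSpace.single q (1:ℂ))
  rw [hv, mul_one] at h1
  refine le_trans ?_ h1
  have hw : ((EuclideanSpace.equiv (Fin r) ℂ).symm
      (M.mulVec (EuclideanSpace.single q (1:ℂ)))) p = M p q := by
    simp [Matrix.mulVec, dotProduct, EuclideanSpace.single_apply, mul_ite]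
  rw [← hw]
  exact eucl_coord_le _ p

lemma pi_decomp {n : ℕ} {m : Fin (n+1) → ℕ}
    (b : Π j : Fin (n+1), Matrix (Fin (m j)) (Fin (m j)) ℂ) :
    b = ∑ k, ∑ p, ∑ q, (b k p q) • matUnit k p q := by
  conv_lhs => rw [← Finset.univ_sum_single b]
  refine Finset.sum_congr rfl fun k _ => ?_
  have h1 : b k = ∑ p, ∑ q, (b k p q) • Matrix.single p q (1:ℂ) := by
    conv_lhs => rw [Matrix.matrix_eq_sum_single (b k)]
    refine Finset.sum_congr rfl fun p _ => Finset.sum_congr rfl fun q _ => ?_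
    rw [Matrix.smul_single, smul_eq_mul, mul_one]
  calc Pi.single k (b k)
      = (LinearMap.single ℂ (fun j : Fin (n+1) => Matrix (Fin (m j)) (Fin (m j)) ℂ) k) (b k) := rfl
    _ = (LinearMap.single ℂ (fun j : Fin (n+1) => Matrix (Fin (m j)) (Fin (m j)) ℂ) k)
          (∑ p, ∑ q, (b k p q) • Matrix.single p q (1:ℂ)) := by rw [← h1]
    _ = ∑ p, ∑ q, (b k p q) • matUnit k p q := by
        rw [map_sum]
        refine Finset.sum_congr rfl fun p _ => ?_
        rw [map_sum]
        refine Finset.sum_congr rfl fun q _ => ?_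
        rw [map_smul]
        rfl

lemma mu_bound {n : ℕ} {m : Fin (n+1) → ℕ}
    (μ : (Π j : Fin (n+1), Matrix (Fin (m j)) (Fin (m j)) ℂ) →L[ℂ] ℂ)
    (b : Π j : Fin (n+1), Matrix (Fin (m j)) (Fin (m j)) ℂ) :
    ‖μ b‖ ≤ kConst μ * ‖b‖ := by
  have hb : μ b = ∑ k, ∑ p, ∑ q, (b k p q) * μ (matUnit k p q) := by
    conv_lhs => rw [pi_decomp b]
    rw [map_sum]
    refine Finset.sum_congr rfl fun k _ => ?_
    rw [map_sum]
    refine Finset.sum_congr rfl fun p _ => ?_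
    rw [map_sum]
    refine Finset.sum_congr rfl fun q _ => ?_
    rw [map_smul, smul_eq_mul]
  rw [hb, kConst, Finset.sum_mul]
  refine le_trans (norm_sum_le _ _) (Finset.sum_le_sum fun k _ => ?_)
  rw [Finset.sum_mul]
  refine le_trans (norm_sum_le _ _) (Finset.sum_le_sum fun p _ => ?_)
  rw [Finset.sum_mul]
  refine le_trans (norm_sum_le _ _) (Finset.sum_le_sum fun q _ => ?_)
  rw [norm_mul]
  have h1 : ‖b k p q‖ ≤ ‖b‖ := le_trans (entry_le (b k) p q) (norm_le_pi_norm b k)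
  calc ‖b k p q‖ * ‖μ (matUnit k p q)‖ ≤ ‖b‖ * ‖μ (matUnit k p q)‖ :=
        mul_le_mul_of_nonneg_right h1 (norm_nonneg _)
    _ = ‖μ (matUnit k p q)‖ * ‖b‖ := mul_comm _ _

lemma kConst_nonneg {n : ℕ} {m : Fin (n+1) → ℕ}
    (μ : (Π j : Fin (n+1), Matrix (Fin (m j)) (Fin (m j)) ℂ) →L[ℂ] ℂ) :
    0 ≤ kConst μ :=
  Finset.sum_nonneg fun _ _ => Finset.sum_nonneg fun _ _ =>
    Finset.sum_nonneg fun _ _ => norm_nonneg _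

end Statement15Aux


/-- for a state `μ` on `A = ⊕_k M_{m_k}(ℂ)`, the map `Δ_μ : x ↦ μ_x`
lands in the state space of `C(X,A)`, is a homeomorphism onto its image for the
weak-* topology, and is `N·k_μ`-Lipschitz for the Monge–Kantorovich metric of any of
the seminorms `L^{(n),q}`. -/
theorem statement15
    (X : Type*) [MetricSpace X] [CompactSpace X]
    (n : ℕ) (m : Fin (n + 1) → ℕ) (hm : ∀ k, 0 < m k)
    (μ : (Π j : Fin (n + 1), Matrix (Fin (m j)) (Fin (m j)) ℂ) →L[ℂ] ℂ)
    (hμ : IsState μ) :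
    (∀ x : X, IsState (stateAt (X := X) μ x)) ∧
    Topology.IsEmbedding
      (fun x : X => StrongDual.toWeakDual (stateAt (X := X) μ x)) ∧
    (∀ (nn : (Π j : Fin (n + 1), Matrix (Fin (m j)) (Fin (m j)) ℂ) → ℝ),
      IsNormOn _ nn → ∀ M N : ℝ, 0 < M → 0 < N →
      (∀ a, M * nn a ≤ ‖a‖ ∧ ‖a‖ ≤ N * nn a) →
      ∀ L : C(X, Π j : Fin (n + 1), Matrix (Fin (m j)) (Fin (m j)) ℂ) → ℝ≥0∞,
        (L = LCXn nn ∨ L = LCn nn ∨ ∃ ν, IsState ν ∧ L = Lmun nn ν) →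
        ∀ x y : X,
          mkDist L (stateAt μ x) (stateAt μ y)
            ≤ ENNReal.ofReal (N * kConst μ * dist x y)) := by
  classical
  have stateAt_apply : ∀ (x : X) (a : C(X, Π j : Fin (n+1), Matrix (Fin (m j)) (Fin (m j)) ℂ)),
      stateAt (X := X) μ x a = μ (a x) := fun _ _ => rfl
  refine ⟨?_, ?_, ?_⟩
  · -- each stateAt μ x is a state
    intro x
    refine ⟨?_, fun b => ?_⟩
    · rw [stateAt_apply]
      rw [ContinuousMap.one_apply]
      exact hμ.1
    · have h : (star b * b) x = star (b x) * b x := rfl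
      rw [stateAt_apply, h]
      exact hμ.2 (b x)
  · -- embedding
    have hc : Continuous (fun x : X => StrongDual.toWeakDual (stateAt (X := X) μ x)) := by
      apply WeakDual.continuous_of_continuous_eval
      intro a
      exact μ.continuous.comp a.continuous
    refine (hc.isClosedEmbedding ?_).isEmbedding
    intro x y hxy
    set g : C(X, Π j : Fin (n+1), Matrix (Fin (m j)) (Fin (m j)) ℂ) :=
      ⟨fun z => ((dist z y : ℝ) : ℂ) • (1 : Π j : Fin (n+1), Matrix (Fin (m j)) (Fin (m j)) ℂ),
        (Complex.continuous_ofReal.comp (continuous_id.dist continuous_const)).smul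
          continuous_const⟩ with hg
    have h : stateAt (X := X) μ x g = stateAt (X := X) μ y g := DFunLike.congr_fun hxy g
    have hx : stateAt (X := X) μ x g = ((dist x y : ℝ) : ℂ) := by
      rw [stateAt_apply]
      show μ (((dist x y : ℝ) : ℂ) • 1) = _
      rw [map_smul, hμ.1, smul_eq_mul, mul_one]
    have hy : stateAt (X := X) μ y g = 0 := by
      rw [stateAt_apply]
      show μ (((dist y y : ℝ) : ℂ) • 1) = 0
      simp
    have hz : ((dist x y : ℝ) : ℂ) = 0 := by rw [← hx, h, hy]
    exact dist_eq_zero.mp (by exact_mod_cast hz)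
  · -- Lipschitz bound
    intro nn hnn M N hM hN hMN L hL x y
    have hk0 : 0 ≤ kConst μ := Statement15Aux.kConst_nonneg μ
    have hlip : ∀ a, L a ≤ 1 → lipn nn a ≤ 1 := by
      rcases hL with h | h | ⟨ν, _, h⟩ <;> subst h <;> intro a ha <;>
        exact le_trans (le_max_left _ _) ha
    rw [mkDist]
    refine iSup_le fun a => iSup_le fun ha => ?_
    have hl := hlip a ha.2
    have hnn_le : nn (a x - a y) ≤ dist x y := by
      rcases eq_or_ne x y with rfl | hxy
      · have : a x - a x = 0 := sub_self _
        rw [this, (hnn.2.1 0).mpr rfl, dist_self]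
      · have h1 : ENNReal.ofReal (nn (a x - a y) / dist x y) ≤ 1 := by
          refine le_trans ?_ hl
          exact le_iSup₂ (f := fun (p : X × X) (_ : p.1 ≠ p.2) =>
            ENNReal.ofReal (nn (a p.1 - a p.2) / dist p.1 p.2)) (x, y) hxy
        have hd : (0 : ℝ) < dist x y := dist_pos.mpr hxy
        rw [ENNReal.ofReal_le_one, div_le_one hd] at h1
        exact h1
    have hA : ‖a x - a y‖ ≤ N * dist x y := by
      refine le_trans (hMN (a x - a y)).2 ?_
      exact mul_le_mul_of_nonneg_left hnn_le hN.le
    have hfin : ‖stateAt (X := X) μ x a - stateAt (X := X) μ y a‖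
        ≤ N * kConst μ * dist x y := by
      have he : stateAt (X := X) μ x a - stateAt (X := X) μ y a = μ (a x - a y) := by
        rw [map_sub, stateAt_apply, stateAt_apply]
      rw [he]
      calc ‖μ (a x - a y)‖ ≤ kConst μ * ‖a x - a y‖ := Statement15Aux.mu_bound μ _
        _ ≤ kConst μ * (N * dist x y) := mul_le_mul_of_nonneg_left hA hk0
        _ = N * kConst μ * dist x y := by ring
    exact ENNReal.ofReal_le_ofReal hfin
end

section
/- Let (X, d_X) be a compact metric space and A = ⊕_{k=0}^n M_{m_k}(ℂ). Let ‖·‖_𝗇 be a norm on A with constants M, N > 0 satisfying M‖·‖_𝗇 ≤ ‖·‖_A ≤ N‖·‖_𝗇, and let tr_v = ⊕_k v_k tr_{m_k} be the tracial state associated to v = (v_0,…,v_n) with v_k ∈ [0,1] and Σ v_k = 1. Then for the seminorm L^{(𝗇),C(X)} and all x, y ∈ X: M·d_X(x,y) ≤ mk_{L^{(𝗇),C(X)}}((tr_v)_x, (tr_v)_y) ≤ N·d_X(x,y). In particular the map x ↦ (tr_v)_x is bi-Lipschitz from (X, d_X) into the state space of C(X,A) with the Monge–Kantorovich metric. -/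
open scoped ENNReal
set_option synthInstance.maxHeartbeats 1000000
set_option maxHeartbeats 1000000

open scoped Matrix.Norms.L2Operator

section Aux

open scoped Matrix.Norms.L2Operator

lemma entry_le_opNorm {k : ℕ} (A : Matrix (Fin k) (Fin k) ℂ) (i j : Fin k) :
    ‖A i j‖ ≤ ‖A‖ := by
  have h := A.l2_opNorm_mulVec (EuclideanSpace.single j (1 : ℂ))
  rw [EuclideanSpace.norm_single, norm_one, mul_one] at h
  refine le_trans ?_ h
  set yv := (EuclideanSpace.equiv (Fin k) ℂ).symm (A.mulVec (EuclideanSpace.single j 1)) with hyv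
  have hyi : yv i = A i j := by
    show A.mulVec (EuclideanSpace.single j 1) i = A i j
    rw [Matrix.mulVec, dotProduct]
    rw [Finset.sum_eq_single j]
    · simp [EuclideanSpace.single_apply]
    · intro b _ hb; simp [EuclideanSpace.single_apply, hb]
    · simp
  rw [← hyi, EuclideanSpace.norm_eq]
  rw [show ‖yv i‖ = Real.sqrt (‖yv i‖ ^ 2) from (Real.sqrt_sq (norm_nonneg _)).symm]
  apply Real.sqrt_le_sqrt
  exact Finset.single_le_sum (fun l _ => sq_nonneg ‖yv l‖) (Finset.mem_univ i)

lemma trace_norm_le' {k : ℕ} (A : Matrix (Fin k) (Fin k) ℂ) :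
    ‖A.trace‖ ≤ k * ‖A‖ := by
  calc ‖A.trace‖ ≤ ∑ i, ‖A i i‖ := norm_sum_le _ _
    _ ≤ ∑ _i : Fin k, ‖A‖ := Finset.sum_le_sum fun i _ => entry_le_opNorm A i i
    _ = k * ‖A‖ := by simp [Finset.sum_const, nsmul_eq_mul]

variable {n : ℕ} {m : Fin (n + 1) → ℕ}

lemma trV_apply (v : Fin (n + 1) → ℝ)
    (a : Π j : Fin (n + 1), Matrix (Fin (m j)) (Fin (m j)) ℂ) :
    trV v a = ∑ k : Fin (n + 1), ((v k : ℂ) / (m k : ℂ)) * (a k).trace := rfl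

lemma trV_one (hm : ∀ k, 0 < m k) (v : Fin (n + 1) → ℝ) (hv1 : ∑ k, v k = 1) :
    trV (m := m) v 1 = 1 := by
  rw [trV_apply]
  have key : ∀ k : Fin (n + 1),
      ((v k : ℂ) / (m k : ℂ)) * ((1 : Matrix (Fin (m k)) (Fin (m k)) ℂ)).trace
        = (v k : ℂ) := by
    intro k
    rw [Matrix.trace_one, Fintype.card_fin]
    have hmk : ((m k : ℂ)) ≠ 0 := by exact_mod_cast (hm k).ne'
    field_simp
  simp only [Pi.one_apply] at *
  rw [Finset.sum_congr rfl fun k _ => key k]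
  have := congrArg (fun r : ℝ => (r : ℂ)) hv1
  push_cast at this
  exact this

lemma norm_trV_le (hm : ∀ k, 0 < m k) (v : Fin (n + 1) → ℝ)
    (hv : ∀ k, 0 ≤ v k) (hv1 : ∑ k, v k = 1)
    (a : Π j : Fin (n + 1), Matrix (Fin (m j)) (Fin (m j)) ℂ) :
    ‖trV v a‖ ≤ ‖a‖ := by
  rw [trV_apply]
  calc ‖∑ k : Fin (n + 1), ((v k : ℂ) / (m k : ℂ)) * (a k).trace‖
      ≤ ∑ k : Fin (n + 1), ‖((v k : ℂ) / (m k : ℂ)) * (a k).trace‖ := norm_sum_le _ _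
    _ ≤ ∑ k : Fin (n + 1), v k * ‖a‖ := by
        refine Finset.sum_le_sum fun k _ => ?_
        rw [norm_mul, norm_div]
        have h1 : ‖((v k : ℂ))‖ = v k := by
          rw [Complex.norm_real, Real.norm_eq_abs, abs_of_nonneg (hv k)]
        have h2 : ‖((m k : ℂ))‖ = (m k : ℝ) := by
          simp
        rw [h1, h2]
        have htr : ‖(a k).trace‖ ≤ (m k : ℝ) * ‖a k‖ := trace_norm_le' (a k)
        have hak : ‖a k‖ ≤ ‖a‖ := norm_le_pi_norm a k
        have hmk : (0 : ℝ) < (m k : ℝ) := by exact_mod_cast hm k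
        calc v k / (m k : ℝ) * ‖(a k).trace‖
            ≤ v k / (m k : ℝ) * ((m k : ℝ) * ‖a‖) := by
              refine mul_le_mul_of_nonneg_left ?_ (div_nonneg (hv k) hmk.le)
              exact htr.trans (mul_le_mul_of_nonneg_left hak (le_of_lt hmk))
          _ = v k * ‖a‖ := by field_simp
    _ = ‖a‖ := by rw [← Finset.sum_mul, hv1, one_mul]

end Aux

/-- for the tracial state `tr_v` on `⊕_k M_{m_k}(ℂ)`, the map
`x ↦ (tr_v)_x` is bi-Lipschitz for the Monge–Kantorovich metric of `L^{(n),C(X)}`,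
with lower constant `M` and upper constant `N`. -/
theorem statement16
    (X : Type*) [MetricSpace X] [CompactSpace X]
    (n : ℕ) (m : Fin (n + 1) → ℕ) (hm : ∀ k, 0 < m k)
    (nn : (Π j : Fin (n + 1), Matrix (Fin (m j)) (Fin (m j)) ℂ) → ℝ)
    (hnn : IsNormOn _ nn) (M N : ℝ) (hM : 0 < M) (hN : 0 < N)
    (hMN : ∀ a, M * nn a ≤ ‖a‖ ∧ ‖a‖ ≤ N * nn a)
    (v : Fin (n + 1) → ℝ) (hv : ∀ k, 0 ≤ v k ∧ v k ≤ 1) (hv1 : ∑ k, v k = 1) :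
    ∀ x y : X,
      ENNReal.ofReal (M * dist x y)
          ≤ mkDist (LCXn nn) (stateAt (trV v) x) (stateAt (trV v) y) ∧
      mkDist (LCXn nn) (stateAt (trV v) x) (stateAt (trV v) y)
          ≤ ENNReal.ofReal (N * dist x y) := by
  classical
  have hvnn : ∀ k, 0 ≤ v k := fun k => (hv k).1
  haveI : ∀ k : Fin (n + 1), Nonempty (Fin (m k)) := fun k => ⟨⟨0, hm k⟩⟩
  haveI : Nontrivial (Π j : Fin (n + 1), Matrix (Fin (m j)) (Fin (m j)) ℂ) := by
    refine ⟨0, 1, fun h => ?_⟩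
    have := congrFun (congrFun (congrFun h 0) ⟨0, hm 0⟩) ⟨0, hm 0⟩
    simp [Matrix.one_apply] at this
  have hnorm1 : ‖(1 : Π j : Fin (n + 1), Matrix (Fin (m j)) (Fin (m j)) ℂ)‖ = 1 :=
    norm_one
  have hnn1 : nn 1 ≤ 1 / M := by
    have := (hMN 1).1
    rw [hnorm1] at this
    rw [le_div_iff₀ hM, mul_comm]
    exact this
  intro x y
  constructor
  · -- lower bound
    set f : C(X, Π j : Fin (n + 1), Matrix (Fin (m j)) (Fin (m j)) ℂ) :=
      ⟨fun z => ((M * dist z y : ℝ) : ℂ) • (1 : Π j : Fin (n + 1),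
        Matrix (Fin (m j)) (Fin (m j)) ℂ), by fun_prop⟩ with hf
    have hfz : ∀ z, f z = ((M * dist z y : ℝ) : ℂ) • (1 : Π j : Fin (n + 1),
        Matrix (Fin (m j)) (Fin (m j)) ℂ) := fun z => rfl
    have hsa : IsSelfAdjoint f := by
      rw [IsSelfAdjoint]
      refine ContinuousMap.ext fun z => ?_
      rw [ContinuousMap.star_apply]
      rw [hfz, star_smul, star_one, Complex.star_def, Complex.conj_ofReal]
    have hsub : ∀ z w, f z - f w = ((M * dist z y - M * dist w y : ℝ) : ℂ) • (1 : Π j : Fin (n + 1),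
        Matrix (Fin (m j)) (Fin (m j)) ℂ) := by
      intro z w
      rw [hfz, hfz, ← sub_smul]
      norm_cast
    have hlip : lipn nn f ≤ 1 := by
      refine iSup_le fun p => iSup_le fun hp => ?_
      rw [ENNReal.ofReal_le_one]
      rw [div_le_one (dist_pos.mpr hp)]
      rw [hsub, hnn.2.2.2]
      have habs : |M * dist p.1 y - M * dist p.2 y| ≤ M * dist p.1 p.2 := by
        rw [← mul_sub, abs_mul, abs_of_pos hM]
        exact mul_le_mul_of_nonneg_left (abs_dist_sub_le _ _ _) (le_of_lt hM)
      calc |M * dist p.1 y - M * dist p.2 y| * nn 1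
          ≤ (M * dist p.1 p.2) * (1 / M) := by
            refine mul_le_mul habs hnn1 (hnn.1 1) (by positivity)
        _ = dist p.1 p.2 := by field_simp
    have hquot : quotCXA f ≤ 0 := by
      refine csInf_le ⟨0, fun r hr => ?_⟩ ?_
      · obtain ⟨b, _, rfl⟩ := hr
        exact norm_nonneg _
      · exact ⟨f, fun z => ⟨((M * dist z y : ℝ) : ℂ), hfz z⟩, by simp⟩
    have hLf : LCXn nn f ≤ 1 := by
      rw [LCXn, max_le_iff]
      refine ⟨hlip, ?_⟩
      calc ENNReal.ofReal (quotCXA f) ≤ ENNReal.ofReal 0 := ENNReal.ofReal_le_ofReal hquot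
        _ ≤ 1 := by simp
    have hval : stateAt (trV v) x f - stateAt (trV v) y f = ((M * dist x y : ℝ) : ℂ) := by
      show trV v (f x) - trV v (f y) = _
      rw [hfz, hfz, map_smul, map_smul, trV_one hm v hv1, dist_self, mul_zero]
      simp
    calc ENNReal.ofReal (M * dist x y)
        = ENNReal.ofReal ‖stateAt (trV v) x f - stateAt (trV v) y f‖ := by
          rw [hval, Complex.norm_real, Real.norm_eq_abs,
            abs_of_nonneg (by positivity)]
      _ ≤ mkDist (LCXn nn) (stateAt (trV v) x) (stateAt (trV v) y) := by
          rw [mkDist]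
          exact le_iSup₂ (f := fun a _ => ENNReal.ofReal ‖stateAt (trV v) x a - stateAt (trV v) y a‖)
            f ⟨hsa, hLf⟩
  · -- upper bound
    rw [mkDist]
    refine iSup_le fun a => iSup_le fun ha => ?_
    obtain ⟨_, hL⟩ := ha
    have hlip : lipn nn a ≤ 1 := le_trans (le_max_left _ _) hL
    have hnn_xy : nn (a x - a y) ≤ dist x y := by
      rcases eq_or_ne x y with h | h
      · subst h
        simp only [sub_self, dist_self]
        rw [(hnn.2.1 0).mpr rfl]
      · have h1 : ENNReal.ofReal (nn (a x - a y) / dist x y) ≤ 1 := by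
          refine le_trans ?_ hlip
          exact le_iSup₂ (f := fun (p : X × X) (_ : p.1 ≠ p.2) =>
            ENNReal.ofReal (nn (a p.1 - a p.2) / dist p.1 p.2)) (x, y) h
        rw [ENNReal.ofReal_le_one, div_le_one (dist_pos.mpr h)] at h1
        exact h1
    have hkey : ‖stateAt (trV v) x a - stateAt (trV v) y a‖ ≤ N * dist x y := by
      have : stateAt (trV v) x a - stateAt (trV v) y a = trV v (a x - a y) := by
        show trV v (a x) - trV v (a y) = _
        rw [map_sub]
      rw [this]
      calc ‖trV v (a x - a y)‖ ≤ ‖a x - a y‖ := norm_trV_le hm v hvnn hv1 _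
        _ ≤ N * nn (a x - a y) := (hMN _).2
        _ ≤ N * dist x y := mul_le_mul_of_nonneg_left hnn_xy (le_of_lt hN)
    exact ENNReal.ofReal_le_ofReal hkey
end
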